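/- arXiv:1902.03577 — 4 statements merged into one kernel-verified Lean document; each statement's English description precedes it below -/
import Mathlib

section
/- (Equidistribution of lacunary Walsh partial sums with Rademacher partial sums) Let q ≥ 2 and let (w_{n_k}) be a q-lacunary sequence of Walsh functions. Then for every M ≥ 1 and every square-summable real sequence (a_k), the functions W_M := Σ_{k=1}^M a_k w_{n_k} and R_M := Σ_{k=1}^M a_k r_k have the same distribution function, i.e. m({x ∈ [0,1] : |W_M(x)| > λ}) = m({x ∈ [0,1] : |R_M(x)| > λ}) for all λ > 0. -/
open MeasureTheory Real Set Filter

/-- The Rademacher functions `r_k(t) = sign (sin (2^k π t))`. -/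
noncomputable def rademacher (k : ℕ) (t : ℝ) : ℝ :=
  Real.sign (Real.sin (2 ^ k * Real.pi * t))

/-- The Walsh functions in Paley's numbering: `w_k = ∏ r_{i+1}^{bit_i(k)}`. -/
noncomputable def walsh (k : ℕ) (t : ℝ) : ℝ :=
  ∏ i ∈ Finset.range k, if Nat.testBit k i then rademacher (i + 1) t else 1

/-- A sequence `(w_{n k})` of Walsh functions is `q`-lacunary if the `n k` are
positive integers and `n (k+1) / n k ≥ q` for all `k`. -/
def WalshLacunary (q : ℝ) (n : ℕ → ℕ) : Prop :=
  (∀ k, 1 ≤ n k) ∧ ∀ k, q * (n k : ℝ) ≤ (n (k + 1) : ℝ)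

/-- The `L^p` norm of a function on `[0,1]`. -/
noncomputable def lpNorm (p : ℝ) (f : ℝ → ℝ) : ℝ :=
  (∫ t in Set.Icc (0:ℝ) 1, |f t| ^ p) ^ (1 / p)


noncomputable def sgnz (c : ZMod 2) : ℝ := if c = 1 then -1 else 1

def bz (b : Bool) : ZMod 2 := if b then 1 else 0

lemma bz_xor (a b : Bool) : bz (a ^^ b) = bz a + bz b := by cases a <;> cases b <;> decide

lemma neg_one_pow_eq_sgnz (e : ℕ) : ((-1 : ℝ)) ^ e = sgnz (e : ZMod 2) := by
  have h2 : ((e : ZMod 2)) = ((e % 2 : ℕ) : ZMod 2) := (ZMod.natCast_mod e 2).symm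
  rcases Nat.even_or_odd e with he | he
  · rw [he.neg_one_pow, sgnz, h2, Nat.even_iff.mp he]
    norm_num
  · rw [he.neg_one_pow, sgnz, h2, Nat.odd_iff.mp he]
    norm_num

lemma cast_div_pow_eq_bz (j m : ℕ) : ((j / 2 ^ m : ℕ) : ZMod 2) = bz (j.testBit m) := by
  have h2 : ((j / 2 ^ m : ℕ) : ZMod 2) = ((j / 2 ^ m % 2 : ℕ) : ZMod 2) :=
    (ZMod.natCast_mod _ 2).symm
  rw [Nat.testBit_eq_decide_div_mod_eq]
  rcases Nat.mod_two_eq_zero_or_one (j / 2 ^ m) with h | h <;> rw [h2, h] <;> simp [bz]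

lemma rademacher_on_Ioo (N i j : ℕ) (hi : i < N) (x : ℝ)
    (hx : x ∈ Set.Ioo ((j : ℝ) / 2 ^ N) ((j + 1 : ℝ) / 2 ^ N)) :
    rademacher (i + 1) x = (-1 : ℝ) ^ (j / 2 ^ (N - 1 - i)) := by
  set m := N - 1 - i with hm
  set d := j / 2 ^ m with hd
  have hNm : (2 : ℝ) ^ (i + 1) * 2 ^ m = 2 ^ N := by
    rw [← pow_add]; congr 1; omega
  have hpow : (0 : ℝ) < 2 ^ m := by positivity
  have hpowN : (0 : ℝ) < 2 ^ N := by positivity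
  have hdj : (d : ℝ) * 2 ^ m ≤ (j : ℝ) := by
    exact_mod_cast Nat.cast_le.mpr (Nat.div_mul_le_self j (2 ^ m))
  have hjd : (j : ℝ) + 1 ≤ ((d : ℝ) + 1) * 2 ^ m := by
    have h1 : j < 2 ^ m * (d + 1) := Nat.lt_mul_div_succ j (Nat.two_pow_pos m)
    have : j + 1 ≤ (d + 1) * 2 ^ m := by rw [mul_comm] at h1; omega
    exact_mod_cast Nat.cast_le.mpr this
  have h1 : (d : ℝ) < 2 ^ (i + 1) * x := by
    have hxl := hx.1
    have hj2 : (j : ℝ) / 2 ^ m < 2 ^ (i + 1) * x := by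
      rw [div_lt_iff₀ hpow]
      have : (j : ℝ) < x * 2 ^ N := by
        calc (j : ℝ) = (j : ℝ) / 2 ^ N * 2 ^ N := by field_simp
        _ < x * 2 ^ N := mul_lt_mul_of_pos_right hxl hpowN
      calc (j : ℝ) < x * 2 ^ N := this
      _ = 2 ^ (i + 1) * x * 2 ^ m := by rw [← hNm]; ring
    calc (d : ℝ) ≤ (j : ℝ) / 2 ^ m := by rw [le_div_iff₀ hpow]; linarith
    _ < 2 ^ (i + 1) * x := hj2
  have h2 : 2 ^ (i + 1) * x < (d : ℝ) + 1 := by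
    have hxr := hx.2
    have hj2 : 2 ^ (i + 1) * x < ((j : ℝ) + 1) / 2 ^ m := by
      rw [lt_div_iff₀ hpow]
      have : x * 2 ^ N < (j : ℝ) + 1 := by
        calc x * 2 ^ N < ((j : ℝ) + 1) / 2 ^ N * 2 ^ N := mul_lt_mul_of_pos_right hxr hpowN
        _ = (j : ℝ) + 1 := by field_simp
      calc 2 ^ (i + 1) * x * 2 ^ m = x * 2 ^ N := by rw [← hNm]; ring
      _ < (j : ℝ) + 1 := this
    calc 2 ^ (i + 1) * x < ((j : ℝ) + 1) / 2 ^ m := hj2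
    _ ≤ (d : ℝ) + 1 := by rw [div_le_iff₀ hpow]; linarith
  have hsin : Real.sin (2 ^ (i + 1) * Real.pi * x) =
      (-1 : ℝ) ^ d * Real.sin (Real.pi * (2 ^ (i + 1) * x - d)) := by
    have hs := Real.sin_add_int_mul_pi (Real.pi * (2 ^ (i + 1) * x - d)) (d : ℤ)
    have harg : Real.pi * (2 ^ (i + 1) * x - d) + ((d : ℤ) : ℝ) * Real.pi
        = 2 ^ (i + 1) * Real.pi * x := by push_cast; ring
    rw [← harg, hs]
    simp
  have hspos : 0 < Real.sin (Real.pi * (2 ^ (i + 1) * x - d)) := by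
    apply Real.sin_pos_of_pos_of_lt_pi
    · have : (0 : ℝ) < 2 ^ (i + 1) * x - d := by linarith
      positivity
    · nlinarith [Real.pi_pos]
  rw [rademacher, hsin]
  rcases Nat.even_or_odd d with he | he
  · rw [he.neg_one_pow, one_mul, Real.sign_of_pos hspos]
  · rw [he.neg_one_pow, neg_one_mul, Real.sign_of_neg (by linarith)]

lemma walsh_two_pow (k : ℕ) (t : ℝ) : walsh (2 ^ k) t = rademacher (k + 1) t := by
  rw [walsh]
  have h : ∀ i ∈ Finset.range (2 ^ k),
      (if Nat.testBit (2 ^ k) i then rademacher (i + 1) t else 1)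
        = (if k = i then rademacher (i + 1) t else 1) := by
    intro i _
    rw [Nat.testBit_two_pow]
    by_cases h : k = i <;> simp [h]
  rw [Finset.prod_congr rfl h, Finset.prod_ite_eq]
  simp [Nat.lt_two_pow_self (n := k)]

lemma testBit_imp_lt' (nk i N : ℕ) (hnk : nk < 2 ^ N) (hb : nk.testBit i = true) : i < N := by
  by_contra h
  push_neg at h
  have : nk < 2 ^ i := lt_of_lt_of_le hnk (Nat.pow_le_pow_right (by norm_num) h)
  rw [Nat.testBit_lt_two_pow this] at hb
  exact Bool.false_ne_true hb

lemma walsh_on_Ioo (N j nk : ℕ) (hnk : nk < 2 ^ N) (x : ℝ)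
    (hx : x ∈ Set.Ioo ((j : ℝ) / 2 ^ N) ((j + 1 : ℝ) / 2 ^ N)) :
    walsh nk x =
      (-1 : ℝ) ^ (∑ i ∈ Finset.range nk, if nk.testBit i then j / 2 ^ (N - 1 - i) else 0) := by
  rw [walsh, ← Finset.prod_pow_eq_pow_sum]
  apply Finset.prod_congr rfl
  intro i _
  by_cases hb : nk.testBit i
  · rw [if_pos hb, if_pos hb, rademacher_on_Ioo N i j (testBit_imp_lt' nk i N hnk hb) x hx]
  · rw [if_neg hb, if_neg hb, pow_zero]
lemma testBit_imp_lt (nk i N : ℕ) (hnk : nk < 2 ^ N) (hb : nk.testBit i = true) : i < N := by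
  by_contra h
  push_neg at h
  have : nk < 2 ^ i := lt_of_lt_of_le hnk (Nat.pow_le_pow_right (by norm_num) h)
  rw [Nat.testBit_lt_two_pow this] at hb
  exact Bool.false_ne_true hb

def phiW (n : ℕ → ℕ) (N j k : ℕ) : ZMod 2 :=
  ∑ i ∈ Finset.range (n k), if (n k).testBit i then bz (j.testBit (N - 1 - i)) else 0

lemma phiW_xor (n : ℕ → ℕ) (N j j' k : ℕ) :
    phiW n N (j ^^^ j') k = phiW n N j k + phiW n N j' k := by
  rw [phiW, phiW, phiW, ← Finset.sum_add_distrib]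
  apply Finset.sum_congr rfl
  intro i _
  by_cases hb : (n k).testBit i
  · simp [hb, Nat.testBit_xor, bz_xor]
  · simp [hb]

lemma phiW_eq_cast (n : ℕ → ℕ) (N j k : ℕ) :
    ((∑ i ∈ Finset.range (n k), if (n k).testBit i then j / 2 ^ (N - 1 - i) else 0 : ℕ) : ZMod 2)
      = phiW n N j k := by
  rw [phiW, Nat.cast_sum]
  apply Finset.sum_congr rfl
  intro i _
  by_cases hb : (n k).testBit i
  · rw [if_pos hb, if_pos hb, cast_div_pow_eq_bz]
  · rw [if_neg hb, if_neg hb, Nat.cast_zero]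

lemma size_le_self (n : ℕ) : n.size ≤ n ∨ n = 0 := by
  rcases Nat.eq_zero_or_pos n with h | h
  · right; exact h
  · left; exact Nat.size_le.mpr (Nat.lt_two_pow_self (n := n))

lemma phiW_surj (n : ℕ → ℕ) (hpos : ∀ k, 1 ≤ n k)
    (hsz : StrictMono fun k => (n k).size)
    (M N : ℕ) (hN : ∀ k, k < M → (n k).size ≤ N) (v : ℕ → ZMod 2) :
    ∃ j, j < 2 ^ N ∧ ∀ k, k < M → phiW n N j k = v k := by
  have hbit : ∀ k, ∀ i, (n k).testBit i = true → i < (n k).size :=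
    fun k i hb => testBit_imp_lt _ _ _ (Nat.lt_size_self _) hb
  induction M with
  | zero => exact ⟨0, Nat.two_pow_pos N, fun k hk => absurd hk (Nat.not_lt_zero k)⟩
  | succ m ih =>
    obtain ⟨j, hj, hjk⟩ := ih (fun k hk => hN k (by omega))
    have hszm : 1 ≤ (n m).size := Nat.size_pos.mpr (hpos m)
    have htN : (n m).size ≤ N := hN m (by omega)
    set t := (n m).size - 1 with ht
    set p := N - 1 - t with hp
    have hpN : p < N := by omega
    have htbit : (n m).testBit t = true := by
      have h1 : 2 ^ t ≤ n m := Nat.lt_size.mp (by omega)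
      have h2 : n m < 2 ^ (t + 1) := Nat.size_le.mp (by omega)
      rw [Nat.testBit_eq_decide_div_mod_eq]
      have hdiv : n m / 2 ^ t = 1 := by
        have : 2 ^ (t + 1) = 2 * 2 ^ t := by rw [pow_succ]; ring
        have hlt : n m / 2 ^ t < 2 := Nat.div_lt_of_lt_mul (by omega)
        have hge : 1 ≤ n m / 2 ^ t := (Nat.one_le_div_iff (Nat.two_pow_pos t)).mpr h1
        omega
      simp [hdiv]
    have hflip0 : ∀ k, k < m → phiW n N (2 ^ p) k = 0 := by
      intro k hk
      apply Finset.sum_eq_zero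
      intro i _
      by_cases hb : (n k).testBit i
      · rw [if_pos hb]
        have hisz : i < (n k).size := hbit k i hb
        have hkm : (n k).size < (n m).size := hsz hk
        have : Nat.testBit (2 ^ p) (N - 1 - i) = false := by
          rw [Nat.testBit_two_pow]
          have : i < t := by omega
          simp only [decide_eq_false_iff_not]
          omega
        rw [this]; rfl
      · rw [if_neg hb]
    have hflip1 : phiW n N (2 ^ p) m = 1 := by
      rw [phiW, Finset.sum_eq_single t]
      · rw [if_pos htbit]
        have : Nat.testBit (2 ^ p) (N - 1 - t) = true := by
          rw [Nat.testBit_two_pow]; simp [hp]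
        rw [this]; rfl
      · intro i _ hne
        by_cases hb : (n m).testBit i
        · rw [if_pos hb]
          have hisz : i < (n m).size := hbit m i hb
          have : Nat.testBit (2 ^ p) (N - 1 - i) = false := by
            rw [Nat.testBit_two_pow]
            simp only [decide_eq_false_iff_not]
            omega
          rw [this]; rfl
        · rw [if_neg hb]
      · intro hnot
        exfalso
        apply hnot
        rw [Finset.mem_range]
        rcases size_le_self (n m) with h | h
        · omega
        · have := hpos m; omega
    by_cases hc : phiW n N j m = v m
    · refine ⟨j, hj, fun k hk => ?_⟩
      rcases Nat.lt_succ_iff_lt_or_eq.mp hk with h | h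
      · exact hjk k h
      · subst h; exact hc
    · refine ⟨j ^^^ 2 ^ p, Nat.xor_lt_two_pow hj (Nat.pow_lt_pow_right (by norm_num) hpN), ?_⟩
      intro k hk
      rcases Nat.lt_succ_iff_lt_or_eq.mp hk with h | h
      · rw [phiW_xor, hflip0 k h, add_zero]; exact hjk k h
      · subst h
        rw [phiW_xor, hflip1]
        revert hc
        have hv := v k
        generalize phiW n N j k = x
        generalize v k = y
        revert x y
        decide

lemma count_fibers (N M : ℕ) (Φ : ℕ → Fin M → ZMod 2)
    (hadd : ∀ j j' k, Φ (j ^^^ j') k = Φ j k + Φ j' k)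
    (hsurj : ∀ v : Fin M → ZMod 2, ∃ j, j < 2 ^ N ∧ Φ j = v)
    (Q : (Fin M → ZMod 2) → Prop) [DecidablePred Q] :
    ∃ K : ℕ, 0 < K ∧
      ((Finset.range (2 ^ N)).filter (fun j => Q (Φ j))).card = (Finset.univ.filter Q).card * K ∧
      2 ^ N = 2 ^ M * K := by
  classical
  set fib : (Fin M → ZMod 2) → Finset ℕ :=
    fun v => (Finset.range (2 ^ N)).filter (fun j => Φ j = v) with hfibdef
  have hfib : ∀ v w, (fib v).card = (fib w).card := by
    intro v w
    obtain ⟨jv, hjv, hv⟩ := hsurj v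
    obtain ⟨jw, hjw, hw⟩ := hsurj w
    set e := jv ^^^ jw with he
    have heN : e < 2 ^ N := Nat.xor_lt_two_pow hjv hjw
    have hΦe : ∀ k, Φ e k = v k + w k := by
      intro k; rw [he, hadd, hv, hw]
    have hmap : ∀ u u' : Fin M → ZMod 2, (∀ k, Φ e k = u k + u' k) →
        ∀ j ∈ fib u, j ^^^ e ∈ fib u' := by
      intro u u' hee j hjmem
      rw [hfibdef, Finset.mem_filter, Finset.mem_range] at hjmem ⊢
      refine ⟨Nat.xor_lt_two_pow hjmem.1 heN, ?_⟩
      funext k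
      rw [hadd, hjmem.2, hee]
      have : ∀ x y : ZMod 2, x + (x + y) = y := by decide
      exact this (u k) (u' k)
    have hΦe' : ∀ k, Φ e k = w k + v k := fun k => by rw [hΦe k, add_comm]
    apply Finset.card_bij' (fun j _ => j ^^^ e) (fun j _ => j ^^^ e)
      (fun j hj => hmap v w hΦe j hj) (fun j hj => hmap w v hΦe' j hj)
    · intro j _; simp [Nat.xor_assoc]
    · intro j _; simp [Nat.xor_assoc]
  obtain ⟨j0, hj0, h0⟩ := hsurj 0
  set K := (fib 0).card with hK
  have hKpos : 0 < K := by
    rw [hK]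
    apply Finset.card_pos.mpr
    exact ⟨j0, by rw [hfibdef]; exact Finset.mem_filter.mpr ⟨Finset.mem_range.mpr hj0, h0⟩⟩
  refine ⟨K, hKpos, ?_, ?_⟩
  · rw [Finset.card_eq_sum_card_fiberwise
      (f := Φ) (t := Finset.univ.filter Q)
      (fun j hj => Finset.mem_filter.mpr ⟨Finset.mem_univ _, (Finset.mem_filter.mp hj).2⟩)]
    rw [Finset.sum_congr rfl (fun v hv => ?_), Finset.sum_const, smul_eq_mul]
    have hv' := (Finset.mem_filter.mp hv).2
    have : ((Finset.range (2 ^ N)).filter (fun j => Q (Φ j))).filter (fun j => Φ j = v)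
        = fib v := by
      rw [hfibdef, Finset.filter_filter]
      ext j
      simp only [Finset.mem_filter, Finset.mem_range]
      constructor
      · rintro ⟨h1, _, h2⟩; exact ⟨h1, h2⟩
      · rintro ⟨h1, h2⟩; exact ⟨h1, by rw [h2]; exact hv', h2⟩
    rw [this, hfib v 0]
  · have h1 : (Finset.range (2 ^ N)).card = ∑ v ∈ (Finset.univ : Finset (Fin M → ZMod 2)),
        ((Finset.range (2 ^ N)).filter (fun j => Φ j = v)).card :=
      Finset.card_eq_sum_card_fiberwise (fun j _ => Finset.mem_univ _)
    rw [Finset.card_range] at h1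
    rw [h1, Finset.sum_congr rfl (fun v _ => hfib v 0), Finset.sum_const, smul_eq_mul]
    congr 1
    rw [Finset.card_univ]
    simp [ZMod.card]

lemma key_lemma (n : ℕ → ℕ) (hpos : ∀ k, 1 ≤ n k) (hsz : StrictMono fun k => (n k).size)
    (M : ℕ) (hM : 1 ≤ M) (a : ℕ → ℝ) (lam : ℝ) :
    volume {x ∈ Set.Icc (0:ℝ) 1 | lam < |∑ k ∈ Finset.range M, a k * walsh (n k) x|} =
      ((Finset.univ.filter (fun c : Fin M → ZMod 2 =>
        lam < |∑ k : Fin M, a (k : ℕ) * sgnz (c k)|)).card : ENNReal) * (2 ^ M : ENNReal)⁻¹ := by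
  classical
  set N := (n (M - 1)).size with hN
  have hNk : ∀ k, k < M → (n k).size ≤ N := by
    intro k hk; rw [hN]; exact hsz.monotone (by omega)
  have hnk2 : ∀ k, k < M → n k < 2 ^ N := fun k hk => Nat.size_le.mp (hNk k hk)
  set Φ : ℕ → Fin M → ZMod 2 := fun j k => phiW n N j (k : ℕ) with hΦ
  set Q : (Fin M → ZMod 2) → Prop :=
    fun c => lam < |∑ k : Fin M, a (k : ℕ) * sgnz (c k)| with hQ
  set W : ℝ → ℝ := fun x => ∑ k ∈ Finset.range M, a k * walsh (n k) x with hW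
  have hpow : (0:ℝ) < 2 ^ N := by positivity
  have stepA : ∀ j : ℕ, ∀ x ∈ Set.Ioo ((j:ℝ)/2^N) (((j:ℝ)+1)/2^N),
      W x = ∑ k : Fin M, a (k : ℕ) * sgnz (Φ j k) := by
    intro j x hx
    have h1 : W x = ∑ k ∈ Finset.range M, a k * sgnz (phiW n N j k) := by
      rw [hW]
      apply Finset.sum_congr rfl
      intro k hk
      rw [walsh_on_Ioo N j (n k) (hnk2 k (Finset.mem_range.mp hk)) x hx,
        neg_one_pow_eq_sgnz, phiW_eq_cast]
    rw [h1]
    exact Finset.sum_range (fun k => a k * sgnz (phiW n N j k))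
  have hpart : ∀ j : ℕ, Set.Ioo ((j:ℝ)/2^N) (((j:ℝ)+1)/2^N) ∩ {x | lam < |W x|}
      = if Q (Φ j) then Set.Ioo ((j:ℝ)/2^N) (((j:ℝ)+1)/2^N) else (∅ : Set ℝ) := by
    intro j
    split_ifs with hq
    · ext x
      simp only [Set.mem_inter_iff, Set.mem_setOf_eq, and_iff_left_iff_imp]
      intro hx
      rw [stepA j x hx]
      exact hq
    · ext x
      simp only [Set.mem_inter_iff, Set.mem_setOf_eq, Set.mem_empty_iff_false, iff_false, not_and]
      intro hx hlt
      apply hq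
      show lam < |∑ k : Fin M, a (k : ℕ) * sgnz (Φ j k)|
      rw [← stepA j x hx]
      exact hlt
  have hIcc : ∀ j ∈ Finset.range (2^N),
      Set.Ioo ((j:ℝ)/2^N) (((j:ℝ)+1)/2^N) ⊆ Set.Icc (0:ℝ) 1 := by
    intro j hj x hx
    have hjlt := Finset.mem_range.mp hj
    have hj2 : (j:ℝ) + 1 ≤ 2^N := by
      have h := Nat.succ_le_of_lt hjlt
      have : ((j+1 : ℕ):ℝ) ≤ ((2^N : ℕ):ℝ) := Nat.cast_le.mpr h
      push_cast at this
      linarith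
    constructor
    · have h0 : (0:ℝ) ≤ (j:ℝ)/2^N := by positivity
      linarith [hx.1]
    · have h1 : ((j:ℝ)+1)/2^N ≤ 1 := by rw [div_le_one hpow]; linarith
      linarith [hx.2]
  set U := ⋃ j ∈ Finset.range (2^N),
    (Set.Ioo ((j:ℝ)/2^N) (((j:ℝ)+1)/2^N) ∩ {x | lam < |W x|}) with hU
  have hvolU : volume {x ∈ Set.Icc (0:ℝ) 1 | lam < |W x|} = volume U := by
    apply le_antisymm
    · have hsub : {x ∈ Set.Icc (0:ℝ) 1 | lam < |W x|}
          ⊆ U ∪ Set.range (fun j : ℕ => (j:ℝ)/2^N) := by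
        rintro x ⟨hxI, hxP⟩
        by_cases hxD : x ∈ Set.range (fun j : ℕ => (j:ℝ)/2^N)
        · exact Or.inr hxD
        · left
          have hx0 : (0:ℝ) ≤ x * 2^N := by nlinarith [hxI.1]
          set j0 : ℤ := ⌊x * 2^N⌋ with hj0
          have hj0nn : 0 ≤ j0 := Int.le_floor.mpr (by exact_mod_cast hx0)
          set j := j0.toNat with hj
          have hjc : (j : ℝ) = (j0 : ℝ) := by
            rw [hj]; exact_mod_cast congrArg (Int.cast : ℤ → ℝ) (Int.toNat_of_nonneg hj0nn)
          have hfl : (j:ℝ) ≤ x * 2^N := by rw [hjc]; exact Int.floor_le _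
          have hne : (j:ℝ) ≠ x * 2^N := by
            intro h
            apply hxD
            refine ⟨j, ?_⟩
            show (j:ℝ)/2^N = x
            rw [h]; field_simp
          have hlt : (j:ℝ) < x*2^N := lt_of_le_of_ne hfl hne
          have hup : x * 2^N < (j:ℝ) + 1 := by
            rw [hjc]
            have := Int.lt_floor_add_one (x * 2^N)
            push_cast at this ⊢
            linarith
          have hjN : j < 2^N := by
            by_contra h
            push_neg at h
            have h2 : ((2^N : ℕ):ℝ) ≤ (j:ℝ) := Nat.cast_le.mpr h
            push_cast at h2
            have hx1 : x ≤ 1 := hxI.2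
            nlinarith
          rw [hU]
          refine Set.mem_iUnion₂.mpr ⟨j, Finset.mem_range.mpr hjN, ?_, hxP⟩
          constructor
          · rw [div_lt_iff₀ hpow]; linarith
          · rw [lt_div_iff₀ hpow]; linarith
      calc volume {x ∈ Set.Icc (0:ℝ) 1 | lam < |W x|}
          ≤ volume (U ∪ Set.range (fun j : ℕ => (j:ℝ)/2^N)) := measure_mono hsub
        _ ≤ volume U + volume (Set.range (fun j : ℕ => (j:ℝ)/2^N)) := measure_union_le _ _
        _ = volume U := by
            rw [Set.Countable.measure_zero (Set.countable_range _) volume, add_zero]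
    · apply measure_mono
      rw [hU]
      intro x hx
      obtain ⟨j, hj, hx1, hx2⟩ := Set.mem_iUnion₂.mp hx
      exact ⟨hIcc j hj hx1, hx2⟩
  have hdisj : (↑(Finset.range (2^N)) : Set ℕ).PairwiseDisjoint
      (fun j => Set.Ioo ((j:ℝ)/2^N) (((j:ℝ)+1)/2^N) ∩ {x | lam < |W x|}) := by
    intro i _ j _ hij
    have hdIoo : Disjoint (Set.Ioo ((i:ℝ)/2^N) (((i:ℝ)+1)/2^N))
        (Set.Ioo ((j:ℝ)/2^N) (((j:ℝ)+1)/2^N)) := by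
      rw [Set.disjoint_left]
      intro x hx1 hx2
      rcases lt_or_gt_of_ne hij with h | h
      · have : (i:ℝ) + 1 ≤ (j:ℝ) := by exact_mod_cast Nat.succ_le_of_lt h
        have h1 := hx1.2
        have h2 := hx2.1
        have : ((i:ℝ)+1)/2^N ≤ (j:ℝ)/2^N := by gcongr
        linarith
      · have : (j:ℝ) + 1 ≤ (i:ℝ) := by exact_mod_cast Nat.succ_le_of_lt h
        have h1 := hx2.2
        have h2 := hx1.1
        have : ((j:ℝ)+1)/2^N ≤ (i:ℝ)/2^N := by gcongr
        linarith
    exact Disjoint.mono Set.inter_subset_left Set.inter_subset_left hdIoo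
  have hvolsum : volume U = ∑ j ∈ Finset.range (2^N),
      volume (Set.Ioo ((j:ℝ)/2^N) (((j:ℝ)+1)/2^N) ∩ {x | lam < |W x|}) := by
    rw [hU]
    apply measure_biUnion_finset hdisj
    intro j _
    rw [hpart]
    split_ifs
    · exact measurableSet_Ioo
    · exact MeasurableSet.empty
  have hvol2 : ∀ j ∈ Finset.range (2^N),
      volume (Set.Ioo ((j:ℝ)/2^N) (((j:ℝ)+1)/2^N) ∩ {x | lam < |W x|})
      = if Q (Φ j) then ((2:ENNReal)^N)⁻¹ else 0 := by
    intro j _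
    rw [hpart]
    split_ifs
    · rw [Real.volume_Ioo]
      have heq : ((j:ℝ)+1)/2^N - (j:ℝ)/2^N = ((2:ℝ)^N)⁻¹ := by field_simp; ring
      rw [heq, ENNReal.ofReal_inv_of_pos hpow]
      congr 1
      rw [ENNReal.ofReal_pow (by norm_num : (0:ℝ) ≤ 2)]
      norm_num
    · exact measure_empty
  have hsurjPhi : ∀ v : Fin M → ZMod 2, ∃ j, j < 2 ^ N ∧ Φ j = v := by
    intro v
    obtain ⟨j, hj, hk⟩ := phiW_surj n hpos hsz M N hNk
      (fun k => if h : k < M then v ⟨k, h⟩ else 0)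
    refine ⟨j, hj, funext fun k => ?_⟩
    have h1 := hk (k : ℕ) k.isLt
    rw [hΦ]
    simp only []
    rw [h1, dif_pos k.isLt]
  obtain ⟨K, hKpos, hcount, hKN⟩ := count_fibers N M Φ
    (fun j j' k => phiW_xor n N j j' (k : ℕ)) hsurjPhi Q
  rw [hvolU, hvolsum, Finset.sum_congr rfl hvol2, ← Finset.sum_filter,
    Finset.sum_const, nsmul_eq_mul, hcount]
  have hKne : (K : ENNReal) ≠ 0 := Nat.cast_ne_zero.mpr (by omega)
  have hKnt : (K : ENNReal) ≠ ⊤ := ENNReal.natCast_ne_top K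
  have h2N : ((2 : ENNReal))^N = 2^M * (K : ENNReal) := by
    have := congrArg (fun t : ℕ => (t : ENNReal)) hKN
    push_cast at this
    exact this
  rw [h2N, ENNReal.mul_inv (Or.inl (by positivity)) (Or.inl (by
    exact ENNReal.pow_ne_top ENNReal.ofNat_ne_top))]
  push_cast
  calc ((Finset.univ.filter Q).card : ENNReal) * (K : ENNReal) * (((2:ENNReal)^M)⁻¹ * (K:ENNReal)⁻¹)
      = ((Finset.univ.filter Q).card : ENNReal) * ((2:ENNReal)^M)⁻¹ * ((K:ENNReal) * (K:ENNReal)⁻¹) := by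
        ring
    _ = ((Finset.univ.filter Q).card : ENNReal) * ((2:ENNReal)^M)⁻¹ := by
        rw [ENNReal.mul_inv_cancel hKne hKnt, mul_one]

/-- **Equidistribution of lacunary Walsh partial sums with Rademacher partial
sums** for lacunarity constant `q ≥ 2`. -/
theorem walsh_rademacher_equidistributed (q : ℝ) (hq : 2 ≤ q) (n : ℕ → ℕ)
    (hn : WalshLacunary q n) (M : ℕ) (hM : 1 ≤ M)
    (a : ℕ → ℝ) (ha : Summable (fun k => a k ^ 2)) (lam : ℝ) (hlam : 0 < lam) :
    volume {x ∈ Set.Icc (0:ℝ) 1 |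
        lam < |∑ k ∈ Finset.range M, a k * walsh (n k) x|} =
      volume {x ∈ Set.Icc (0:ℝ) 1 |
        lam < |∑ k ∈ Finset.range M, a k * rademacher (k + 1) x|} := by
  have hpos := hn.1
  have hsz : StrictMono fun k => (n k).size := by
    apply strictMono_nat_of_lt_succ
    intro k
    have h2 : 2 * n k ≤ n (k + 1) := by
      have hl := hn.2 k
      have hq2 : (2:ℝ) * (n k : ℝ) ≤ q * (n k : ℝ) :=
        mul_le_mul_of_nonneg_right hq (Nat.cast_nonneg _)
      have : ((2 * n k : ℕ) : ℝ) ≤ ((n (k+1) : ℕ) : ℝ) := by push_cast; linarith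
      exact_mod_cast this
    apply Nat.lt_size.mpr
    have hs1 : 1 ≤ (n k).size := Nat.size_pos.mpr (hpos k)
    have hle : 2 ^ ((n k).size - 1) ≤ n k := Nat.lt_size.mp (by omega)
    calc 2 ^ (n k).size = 2 * 2 ^ ((n k).size - 1) := by
          rw [← pow_succ']
          congr 1
          omega
      _ ≤ 2 * n k := by omega
      _ ≤ n (k + 1) := h2
  have hsz2 : StrictMono fun k : ℕ => (2 ^ k : ℕ).size := by
    intro i j hij
    simp only [Nat.size_pow]
    omega
  have hset : {x ∈ Set.Icc (0:ℝ) 1 | lam < |∑ k ∈ Finset.range M, a k * rademacher (k + 1) x|}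
      = {x ∈ Set.Icc (0:ℝ) 1 | lam < |∑ k ∈ Finset.range M, a k * walsh (2 ^ k) x|} := by
    ext x
    simp only [Set.mem_setOf_eq, walsh_two_pow]
  rw [hset, key_lemma n hpos hsz M hM a lam,
    key_lemma (fun k => 2 ^ k) (fun k => Nat.one_le_two_pow) hsz2 M hM a lam]
end

section
/- (Uniform basis inequality for lacunary Walsh sequences in L^p) Let 1 ≤ p < ∞ and q > 1. There exists a constant K = K(p,q) > 0 such that for every q-lacunary sequence (w_{n_k}) of Walsh functions, all integers 1 ≤ M < N, and all real numbers a_1, …, a_N, ‖Σ_{k=1}^M a_k w_{n_k}‖_{L^p([0,1])} ≤ K · ‖Σ_{k=1}^N a_k w_{n_k}‖_{L^p([0,1])}. -/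
open MeasureTheory Real Set Filter

noncomputable def walshD (m : ℕ) (t : ℝ) : ℝ :=
  ∏ i ∈ Finset.range m, if Nat.testBit m i then ((-1 : ℝ)) ^ ⌊(2:ℝ) ^ (i+1) * t⌋ else 1

lemma testBit_le {m i : ℕ} (h : m.testBit i = true) : 2 ^ i ≤ m := by
  by_contra hc
  push_neg at hc
  rw [Nat.testBit_lt_two_pow hc] at h
  exact Bool.false_ne_true h

lemma abs_neg_one_zpow' (z : ℤ) : |(-1 : ℝ) ^ z| = 1 := by
  rcases Int.even_or_odd z with h | h
  · rw [h.neg_one_zpow]; norm_num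
  · rw [h.neg_one_zpow]; norm_num

lemma walshD_abs (m : ℕ) (t : ℝ) : |walshD m t| = 1 := by
  rw [walshD, Finset.abs_prod]
  apply Finset.prod_eq_one
  intro i _
  split
  · exact abs_neg_one_zpow' _
  · norm_num

lemma walshD_eval {m L : ℕ} (hm : m < 2 ^ L) (t : ℝ) :
    walshD m t = ∏ i ∈ Finset.range L, if Nat.testBit m i then ((-1 : ℝ)) ^ ⌊(2:ℝ) ^ (i+1) * t⌋ else 1 := by
  rw [walshD]
  rcases le_total m L with h | h
  · apply Finset.prod_subset (Finset.range_subset_range.2 h)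
    intro i hi hni
    simp only [Finset.mem_range, not_lt] at hni
    rw [Nat.testBit_lt_two_pow (lt_of_lt_of_le (lt_of_lt_of_le (Nat.lt_two_pow_self (n := m)) ?_) (le_refl _))]
    · simp
    · exact Nat.pow_le_pow_right (by norm_num) hni
  · symm
    apply Finset.prod_subset (Finset.range_subset_range.2 h)
    intro i hi hni
    simp only [Finset.mem_range, not_lt] at hni
    rw [Nat.testBit_lt_two_pow (lt_of_lt_of_le hm (Nat.pow_le_pow_right (by norm_num) hni))]
    simp

lemma walshD_mul {a b L : ℕ} (ha : a < 2 ^ L) (hb : b < 2 ^ L) (t : ℝ) :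
    walshD a t * walshD b t = walshD (a ^^^ b) t := by
  rw [walshD_eval ha t, walshD_eval hb t, walshD_eval (Nat.xor_lt_two_pow ha hb) t,
    ← Finset.prod_mul_distrib]
  apply Finset.prod_congr rfl
  intro i _
  rw [Nat.testBit_xor]
  rcases h1 : a.testBit i <;> rcases h2 : b.testBit i <;> simp
  rw [← zpow_add₀ (by norm_num : (-1:ℝ) ≠ 0)]
  exact Even.neg_one_zpow ⟨_, rfl⟩

lemma walshD_zero (t : ℝ) : walshD 0 t = 1 := by simp [walshD]

/-- Floor computation on a dyadic interval. -/
lemma floor_eval {e J : ℕ} (he : e ≤ J) (r : ℕ) {t : ℝ}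
    (h1 : (r:ℝ)/2^J ≤ t) (h2 : t < ((r:ℝ)+1)/2^J) :
    ⌊(2:ℝ) ^ e * t⌋ = ((r / 2^(J-e) : ℕ) : ℤ) := by
  set d := J - e with hd
  have hJ : (2:ℝ)^J = 2^e * 2^d := by rw [← pow_add]; congr 1; omega
  have hdm := Nat.div_add_mod r (2^d)
  have hmlt : r % 2^d < 2^d := Nat.mod_lt _ (by positivity)
  have hcast : (r:ℝ) = 2^d * ((r / 2^d : ℕ):ℝ) + ((r % 2^d : ℕ):ℝ) := by
    exact_mod_cast congrArg (fun x : ℕ => (x:ℝ)) hdm.symm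
  have hmcast : ((r % 2^d : ℕ):ℝ) + 1 ≤ (2:ℝ)^d := by exact_mod_cast hmlt
  have h2d : (0:ℝ) < 2^d := by positivity
  have h2e : (0:ℝ) < 2^e := by positivity
  have ht1 : (r:ℝ) ≤ 2^J * t := by
    rw [div_le_iff₀ (by positivity : (0:ℝ) < 2^J)] at h1; linarith
  have ht2 : (2:ℝ)^J * t < (r:ℝ) + 1 := by
    rw [lt_div_iff₀ (by positivity : (0:ℝ) < 2^J)] at h2; linarith
  set k : ℝ := ((r / 2^d : ℕ) : ℝ) with hk
  have hm0 : (0:ℝ) ≤ ((r % 2^d : ℕ):ℝ) := by positivity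
  have key1 : k * 2^d ≤ (2:ℝ)^J * t := by nlinarith
  have key2 : (2:ℝ)^J * t < k * 2^d + 2^d := by nlinarith
  rw [Int.floor_eq_iff]
  constructor
  · show (((r / 2^d : ℕ) : ℤ) : ℝ) ≤ 2^e * t
    rw [Int.cast_natCast, ← hk, ← mul_le_mul_iff_of_pos_right h2d]
    calc k * 2^d ≤ 2^J * t := key1
      _ = 2^e * t * 2^d := by rw [hJ]; ring
  · show (2:ℝ)^e * t < (((r / 2^d : ℕ) : ℤ) : ℝ) + 1
    rw [Int.cast_natCast, ← hk, ← mul_lt_mul_iff_of_pos_right h2d]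
    calc (2:ℝ)^e * t * 2^d = 2^J * t := by rw [hJ]; ring
      _ < (k + 1) * 2^d := by nlinarith
lemma walshD_const {m J : ℕ} (hm : m < 2 ^ J) (r : ℕ) {t : ℝ}
    (h1 : (r:ℝ)/2^J ≤ t) (h2 : t < ((r:ℝ)+1)/2^J) :
    walshD m t = walshD m ((r:ℝ)/2^J) := by
  rw [walshD_eval hm, walshD_eval hm]
  apply Finset.prod_congr rfl
  intro i hi
  rcases hb : m.testBit i
  · simp
  · simp only [if_true]
    have hiJ : i + 1 ≤ J := by
      have := testBit_le hb
      have : 2^i < 2^J := lt_of_le_of_lt this hm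
      have := (Nat.pow_lt_pow_iff_right (by norm_num : (1:ℕ) < 2)).1 this
      omega
    have e1 := floor_eval hiJ r h1 h2
    have e2 := floor_eval hiJ r (le_refl _) (by
      have : (0:ℝ) < 1/2^J := by positivity
      rw [add_div]; linarith)
    rw [e1, e2]

lemma testBit_log {m : ℕ} (hm : m ≠ 0) : m.testBit (Nat.log 2 m) = true := by
  have h1 : 2 ^ Nat.log 2 m ≤ m := Nat.pow_log_le_self 2 hm
  have h2 : m < 2 ^ (Nat.log 2 m + 1) := Nat.lt_pow_succ_log_self (by norm_num) m
  rw [pow_succ] at h2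
  have hdiv : m / 2 ^ Nat.log 2 m = 1 := by
    apply Nat.div_eq_of_lt_le
    · simpa using h1
    · simpa [two_mul, mul_comm] using h2
  rw [Nat.testBit_eq_decide_div_mod_eq, hdiv]
  simp

lemma walshD_flip {m : ℕ} (hm : m ≠ 0) (u : ℕ) :
    walshD m (((2*u+1 : ℕ):ℝ)/2^(Nat.log 2 m + 1)) =
      - walshD m (((2*u : ℕ):ℝ)/2^(Nat.log 2 m + 1)) := by
  set J := Nat.log 2 m + 1 with hJ
  have hmJ : m < 2 ^ J := Nat.lt_pow_succ_log_self (by norm_num) m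
  have key : ∀ b : ℕ, b < 2 → walshD m (((2*u+b : ℕ):ℝ)/2^J) =
      (∏ i ∈ Finset.range (Nat.log 2 m),
        if m.testBit i then ((-1:ℝ)) ^ ((u / 2^(Nat.log 2 m - i - 1) : ℕ)) else 1) * (-1)^(2*u+b) := by
    intro b hb
    rw [walshD_eval hmJ, hJ, Finset.prod_range_succ]
    congr 1
    · apply Finset.prod_congr rfl
      intro i hi
      simp only [Finset.mem_range] at hi
      rcases hbit : m.testBit i
      · simp
      · simp only [if_true]
        have hiJ : i + 1 ≤ J := by omega
        have hfl := floor_eval hiJ (2*u+b) (le_refl _) (by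
          have : (0:ℝ) < 1/2^J := by positivity
          rw [add_div]; linarith)
        rw [hfl, zpow_natCast]
        congr 1
        have hd : J - (i+1) = (Nat.log 2 m - i - 1) + 1 := by omega
        rw [hd, pow_succ, mul_comm (2^(Nat.log 2 m - i - 1)) 2, ← Nat.div_div_eq_div_mul]
        have h2 : (2*u+b)/2 = u := by omega
        rw [h2]
    · rw [testBit_log hm, if_pos rfl]
      have hfl := floor_eval (le_refl J) (2*u+b) (le_refl _) (by
        have : (0:ℝ) < 1/2^J := by positivity
        rw [add_div]; linarith)
      have : J - (Nat.log 2 m + 1) = 0 := by omega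
      rw [show Nat.log 2 m + 1 = J from rfl, hfl, this, pow_zero, Nat.div_one, zpow_natCast]
  have k0 := key 0 (by norm_num)
  simp only [Nat.add_zero] at k0
  rw [key 1 (by norm_num), k0, pow_succ]
  ring
lemma sum_flip_range {m : ℕ} (hm : m ≠ 0) (b : ℕ) :
    ∑ r ∈ Finset.range (2*b), walshD m ((r:ℝ)/2^(Nat.log 2 m + 1)) = 0 := by
  induction b with
  | zero => simp
  | succ b ih =>
    have h : 2*(b+1) = (2*b + 1) + 1 := by ring
    rw [h, Finset.sum_range_succ, Finset.sum_range_succ, ih]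
    have hf := walshD_flip hm b
    push_cast at hf ⊢
    linarith

lemma sum_flip_Ico {m : ℕ} (hm : m ≠ 0) {a b : ℕ} (hab : a ≤ b) :
    ∑ r ∈ Finset.Ico (2*a) (2*b), walshD m ((r:ℝ)/2^(Nat.log 2 m + 1)) = 0 := by
  have h := Finset.sum_Ico_consecutive (fun r : ℕ => walshD m ((r:ℝ)/2^(Nat.log 2 m + 1)))
    (Nat.zero_le (2*a)) (by omega : 2*a ≤ 2*b)
  rw [← Finset.range_eq_Ico] at h
  have h1 := sum_flip_range hm a
  have h2 := sum_flip_range hm b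
  rw [Finset.range_eq_Ico] at h1 h2
  rw [Finset.range_eq_Ico] at h
  linarith

lemma ae_ne_point (c : ℝ) : ∀ᵐ x : ℝ, x ≠ c := by
  rw [MeasureTheory.ae_iff]
  have : {x : ℝ | ¬ x ≠ c} = {c} := by ext x; simp
  rw [this]
  exact measure_singleton c

lemma integral_step {J L : ℕ} (hJL : J ≤ L) {f : ℝ → ℝ}
    (hf : ∀ r : ℕ, ∀ t : ℝ, (r:ℝ)/2^L ≤ t → t < ((r:ℝ)+1)/2^L → f t = f ((r:ℝ)/2^L)) (l : ℕ) :
    ∫ x in ((l:ℝ)/2^J)..(((l:ℝ)+1)/2^J), f x =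
      (2^L : ℝ)⁻¹ * ∑ r ∈ Finset.Ico (l*2^(L-J)) ((l+1)*2^(L-J)), f ((r:ℝ)/2^L) := by
  set K := 2^(L-J) with hK
  set A : ℕ → ℝ := fun s => ((l*K + s : ℕ):ℝ)/2^L with hA
  have h2L : (0:ℝ) < 2^L := by positivity
  have h2J : (0:ℝ) < 2^J := by positivity
  have hJL' : (2:ℝ)^J * (K:ℕ) = 2^L := by
    rw [hK]; push_cast; rw [← pow_add]; congr 1; omega
  have hstep : ∀ s : ℕ, A (s+1) = A s + (2^L : ℝ)⁻¹ := by
    intro s; rw [hA]; push_cast; field_simp; ring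
  have hlt : ∀ s : ℕ, A s < A (s+1) := by
    intro s; rw [hstep s]; have : (0:ℝ) < (2^L:ℝ)⁻¹ := by positivity
    linarith
  have hconst : ∀ s : ℕ, ∀ t : ℝ, A s ≤ t → t < A (s+1) → f t = f (A s) := by
    intro s t h1 h2
    apply hf (l*K+s) t h1
    rw [hstep] at h2
    have : ((l*K+s:ℕ):ℝ) + 1 = ((l*K+s:ℕ):ℝ) + 1 := rfl
    rw [add_div]
    rw [hA] at h2
    simp only at h2
    calc t < ((l*K+s:ℕ):ℝ)/2^L + (2^L:ℝ)⁻¹ := h2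
      _ = ((l*K+s:ℕ):ℝ)/2^L + 1/2^L := by rw [one_div]
  have haes : ∀ s : ℕ, ∀ᵐ x : ℝ, x ∈ Set.Ioc (A s) (A (s+1)) → f x = f (A s) := by
    intro s
    filter_upwards [ae_ne_point (A (s+1))] with x hx hmem
    exact hconst s x (le_of_lt hmem.1) (lt_of_le_of_ne hmem.2 hx)
  have hii : ∀ s : ℕ, IntervalIntegrable f MeasureTheory.volume (A s) (A (s+1)) := by
    intro s
    rw [intervalIntegrable_iff_integrableOn_Ioc_of_le (le_of_lt (hlt s))]
    have hc : MeasureTheory.IntegrableOn (fun _ => f (A s)) (Set.Ioc (A s) (A (s+1)))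
        MeasureTheory.volume := by
      exact MeasureTheory.integrableOn_const measure_Ioc_lt_top.ne
    apply hc.congr
    apply (MeasureTheory.ae_restrict_iff' measurableSet_Ioc).2
    filter_upwards [haes s] with x hx hmem
    exact (hx hmem).symm
  have key : ∀ s : ℕ, (∫ x in (A s)..(A (s+1)), f x) = (2^L:ℝ)⁻¹ * f (A s) := by
    intro s
    rw [intervalIntegral.integral_congr_ae (g := fun _ => f (A s)) ?_,
      intervalIntegral.integral_const]
    · rw [hstep s]; simp [smul_eq_mul]
    · rw [Set.uIoc_of_le (le_of_lt (hlt s))]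
      exact haes s
  have hsum := intervalIntegral.sum_integral_adjacent_intervals (μ := MeasureTheory.volume)
    (a := A) (n := K) (fun k _ => hii k)
  have hA0 : A 0 = (l:ℝ)/2^J := by
    show ((l*K + 0 : ℕ):ℝ)/2^L = (l:ℝ)/2^J
    rw [div_eq_div_iff (ne_of_gt h2L) (ne_of_gt h2J)]
    push_cast
    rw [← hJL']
    ring
  have hAK : A K = ((l:ℝ)+1)/2^J := by
    show ((l*K + K : ℕ):ℝ)/2^L = ((l:ℝ)+1)/2^J
    rw [div_eq_div_iff (ne_of_gt h2L) (ne_of_gt h2J)]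
    push_cast
    rw [← hJL']
    ring
  rw [← hA0, ← hAK, ← hsum]
  rw [Finset.sum_congr rfl (fun s _ => key s), ← Finset.mul_sum,
    Finset.sum_Ico_eq_sum_range]
  have hKK : (l+1)*K - l*K = K := by rw [Nat.succ_mul, Nat.add_sub_cancel_left]
  rw [hKK]
lemma integral_walshD_zero {m J : ℕ} (hm : m ≠ 0) (hJ : 2^J ≤ m) (l : ℕ) :
    ∫ x in ((l:ℝ)/2^J)..(((l:ℝ)+1)/2^J), walshD m x = 0 := by
  set L := Nat.log 2 m + 1 with hL
  have hmL : m < 2^L := Nat.lt_pow_succ_log_self (by norm_num) m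
  have hJlog : J ≤ Nat.log 2 m := (Nat.le_log_iff_pow_le (by norm_num) hm).2 hJ
  have hJL : J ≤ L := by omega
  have hconst : ∀ r : ℕ, ∀ t : ℝ, (r:ℝ)/2^L ≤ t → t < ((r:ℝ)+1)/2^L →
      walshD m t = walshD m ((r:ℝ)/2^L) := fun r t h1 h2 => walshD_const hmL r h1 h2
  rw [integral_step hJL hconst l]
  obtain ⟨D, hD⟩ : ∃ D, L - J = D + 1 := ⟨L - J - 1, by omega⟩
  have e1 : l * 2^(L-J) = 2 * (l * 2^D) := by rw [hD, pow_succ]; ring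
  have e2 : (l+1) * 2^(L-J) = 2 * ((l+1) * 2^D) := by rw [hD, pow_succ]; ring
  rw [e1, e2, sum_flip_Ico hm (Nat.mul_le_mul_right _ (by omega))]
  ring

lemma integral_Icc_step {L : ℕ} {f : ℝ → ℝ}
    (hf : ∀ r : ℕ, ∀ t : ℝ, (r:ℝ)/2^L ≤ t → t < ((r:ℝ)+1)/2^L → f t = f ((r:ℝ)/2^L)) :
    ∫ t in Set.Icc (0:ℝ) 1, f t = (2^L : ℝ)⁻¹ * ∑ r ∈ Finset.range (2^L), f ((r:ℝ)/2^L) := by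
  have h01 : ∫ t in Set.Icc (0:ℝ) 1, f t = ∫ x in (0:ℝ)..1, f x := by
    rw [MeasureTheory.integral_Icc_eq_integral_Ioc, intervalIntegral.integral_of_le zero_le_one]
  have h := integral_step (Nat.zero_le L) hf 0
  have e0 : ((0:ℕ):ℝ)/2^(0:ℕ) = (0:ℝ) := by norm_num
  have e1 : (((0:ℕ):ℝ)+1)/2^(0:ℕ) = (1:ℝ) := by norm_num
  rw [e0, e1] at h
  rw [h01, h]
  congr 1
  rw [Finset.range_eq_Ico]
  congr 1
  norm_num

lemma sign_sin_pi {x : ℝ} (h : Real.sin (Real.pi * x) ≠ 0) :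
    Real.sign (Real.sin (Real.pi * x)) = (-1:ℝ)^⌊x⌋ := by
  have hfr : (⌊x⌋:ℝ) + Int.fract x = x := Int.floor_add_fract x
  have hx : Real.pi * x = Real.pi * Int.fract x + ⌊x⌋ * Real.pi := by linear_combination Real.pi * hfr.symm
  rw [hx, Real.sin_add_int_mul_pi]
  have hf0 : Int.fract x ≠ 0 := by
    intro h0
    rw [hx, Real.sin_add_int_mul_pi, h0] at h
    simp at h
  have hfpos : 0 < Int.fract x := lt_of_le_of_ne (Int.fract_nonneg x) (Ne.symm hf0)
  have hflt : Int.fract x < 1 := Int.fract_lt_one x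
  have hs : 0 < Real.sin (Real.pi * Int.fract x) :=
    Real.sin_pos_of_pos_of_lt_pi (by positivity) (by nlinarith [Real.pi_pos])
  rcases Int.even_or_odd ⌊x⌋ with he | ho
  · rw [he.neg_one_zpow, one_mul, Real.sign_of_pos hs]
  · rw [ho.neg_one_zpow, neg_one_mul, Real.sign_of_neg (by linarith)]

lemma walsh_ae : ∀ᵐ t : ℝ, ∀ m : ℕ, walsh m t = walshD m t := by
  have hnull : ∀ i : ℕ, ∀ᵐ t : ℝ, Real.sin (2^i * Real.pi * t) ≠ 0 := by
    intro i
    rw [MeasureTheory.ae_iff]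
    refine MeasureTheory.measure_mono_null ?_
      (MeasureTheory.measure_iUnion_null fun k : ℤ => MeasureTheory.measure_singleton ((k:ℝ)/2^i))
    · intro t ht
      simp only [Set.mem_setOf_eq, not_not] at ht
      rw [Real.sin_eq_zero_iff] at ht
      obtain ⟨n, hn⟩ := ht
      apply Set.mem_iUnion.2 ⟨n, _⟩
      simp only [Set.mem_singleton_iff]
      have hpi := Real.pi_ne_zero
      have h2 : (0:ℝ) < 2^i := by positivity
      have hnt : (n:ℝ) = 2^i * t :=
        mul_right_cancel₀ hpi (by linarith [hn] : (n:ℝ) * Real.pi = (2^i * t) * Real.pi)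
      rw [hnt]
      field_simp
  filter_upwards [MeasureTheory.ae_all_iff.2 hnull] with t ht m
  rw [walsh, walshD]
  apply Finset.prod_congr rfl
  intro i _
  rcases hb : m.testBit i
  · simp
  · simp only [if_true]
    have harg : (2:ℝ)^(i+1) * Real.pi * t = Real.pi * ((2:ℝ)^(i+1) * t) := by ring
    rw [rademacher, harg, sign_sin_pi (by rw [← harg]; exact ht (i+1))]
noncomputable def dnorm (p : ℝ) (L : ℕ) (v : ℕ → ℝ) : ℝ :=
  ((2^L : ℝ)⁻¹ * ∑ r ∈ Finset.range (2^L), |v r| ^ p) ^ (1/p)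

lemma inner_nonneg (p : ℝ) (L : ℕ) (v : ℕ → ℝ) :
    0 ≤ (2^L : ℝ)⁻¹ * ∑ r ∈ Finset.range (2^L), |v r| ^ p := by
  apply mul_nonneg (by positivity)
  exact Finset.sum_nonneg fun r _ => Real.rpow_nonneg (abs_nonneg _) p

lemma dnorm_nonneg (p : ℝ) (L : ℕ) (v : ℕ → ℝ) : 0 ≤ dnorm p L v :=
  Real.rpow_nonneg (inner_nonneg p L v) _

lemma dnorm_mono {p : ℝ} (hp : 1 ≤ p) (L : ℕ) {v w : ℕ → ℝ}
    (h : ∑ r ∈ Finset.range (2^L), |v r| ^ p ≤ ∑ r ∈ Finset.range (2^L), |w r| ^ p) :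
    dnorm p L v ≤ dnorm p L w := by
  apply Real.rpow_le_rpow (inner_nonneg p L v)
    (mul_le_mul_of_nonneg_left h (by positivity))
  positivity

lemma dnorm_add {p : ℝ} (hp : 1 ≤ p) (L : ℕ) (v w : ℕ → ℝ) :
    dnorm p L (fun r => v r + w r) ≤ dnorm p L v + dnorm p L w := by
  have hc : (0:ℝ) ≤ (2^L : ℝ)⁻¹ := by positivity
  have hsum : ∀ u : ℕ → ℝ, (0:ℝ) ≤ ∑ r ∈ Finset.range (2^L), |u r| ^ p :=
    fun u => Finset.sum_nonneg fun r _ => Real.rpow_nonneg (abs_nonneg _) p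
  have h := Real.Lp_add_le (Finset.range (2^L)) v w hp
  have e : ∀ u : ℕ → ℝ, dnorm p L u =
      ((2^L : ℝ)⁻¹)^(1/p) * (∑ r ∈ Finset.range (2^L), |u r| ^ p) ^ (1/p) := by
    intro u
    rw [dnorm, Real.mul_rpow hc (hsum u)]
  rw [e, e, e, ← mul_add]
  apply mul_le_mul_of_nonneg_left h (Real.rpow_nonneg hc _)

lemma dnorm_sum {p : ℝ} (hp : 1 ≤ p) (L : ℕ) (x : ℕ → ℝ) (y : ℕ → ℕ → ℝ) (s : Finset ℕ) :
    dnorm p L (fun r => x r + ∑ k ∈ s, y k r) ≤ dnorm p L x + ∑ k ∈ s, dnorm p L (y k) := by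
  induction s using Finset.induction with
  | empty => simp
  | insert k s hk ih =>
    have e : (fun r => x r + ∑ j ∈ insert k s, y j r) =
        (fun r => (x r + ∑ j ∈ s, y j r) + y k r) := by
      funext r
      rw [Finset.sum_insert hk]
      ring
    rw [e, Finset.sum_insert hk]
    calc dnorm p L (fun r => (x r + ∑ j ∈ s, y j r) + y k r)
        ≤ dnorm p L (fun r => x r + ∑ j ∈ s, y j r) + dnorm p L (y k) :=
          dnorm_add hp L _ _
      _ ≤ (dnorm p L x + ∑ j ∈ s, dnorm p L (y j)) + dnorm p L (y k) := by linarith [ih]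
      _ = dnorm p L x + (dnorm p L (y k) + ∑ j ∈ s, dnorm p L (y j)) := by ring

lemma jensen_mean {p : ℝ} (hp : 1 ≤ p) (s : Finset ℕ) (v : ℕ → ℝ) (hcard : s.card ≠ 0) :
    ((s.card : ℝ)⁻¹ * ∑ r ∈ s, |v r|) ^ p ≤ (s.card : ℝ)⁻¹ * ∑ r ∈ s, |v r| ^ p := by
  have hcc : ((s.card : ℝ)) ≠ 0 := Nat.cast_ne_zero.2 hcard
  have h := Real.rpow_arith_mean_le_arith_mean_rpow s (fun _ => (s.card:ℝ)⁻¹)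
    (fun r => |v r|) (fun i _ => by positivity)
    (by rw [Finset.sum_const, nsmul_eq_mul]; field_simp) (fun i _ => abs_nonneg _) hp
  rw [← Finset.mul_sum, ← Finset.mul_sum] at h
  exact h

lemma sum_blocks (BB C : ℕ) (h : ℕ → ℝ) :
    ∑ r ∈ Finset.range (BB*C), h r =
      ∑ b ∈ Finset.range BB, ∑ r ∈ Finset.Ico (b*C) ((b+1)*C), h r := by
  induction BB with
  | zero => simp
  | succ BB ih =>
    rw [Finset.sum_range_succ, ← ih, Finset.range_eq_Ico, Finset.range_eq_Ico]
    exact (Finset.sum_Ico_consecutive h (Nat.zero_le (BB*C))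
      (by apply Nat.mul_le_mul_right; omega : BB*C ≤ (BB+1)*C)).symm

lemma sum_walshD_zero {m L : ℕ} (h0 : m ≠ 0) (hL : m < 2^L) :
    ∑ r ∈ Finset.range (2^L), walshD m ((r:ℝ)/2^L) = 0 := by
  have hconst : ∀ r : ℕ, ∀ t : ℝ, (r:ℝ)/2^L ≤ t → t < ((r:ℝ)+1)/2^L →
      walshD m t = walshD m ((r:ℝ)/2^L) := fun r t h1 h2 => walshD_const hL r h1 h2
  have h1 := integral_step (Nat.zero_le L) hconst 0
  have h2 := integral_walshD_zero h0 (J := 0) (by simpa using Nat.one_le_iff_ne_zero.2 h0) 0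
  rw [h2] at h1
  have hidx : Finset.Ico (0*2^(L-0)) ((0+1)*2^(L-0)) = Finset.range (2^L) := by
    rw [Finset.range_eq_Ico, Nat.sub_zero]
    congr 1 <;> omega
  rw [hidx] at h1
  rcases mul_eq_zero.1 h1.symm with h | h
  · exact absurd h (by positivity)
  · exact h
/-- **Uniform basis inequality for lacunary Walsh sequences in `L^p`**,
`1 ≤ p < ∞`. -/
theorem walsh_basis_inequality (p q : ℝ) (hp : 1 ≤ p) (hq : 1 < q) :
    ∃ K : ℝ, 0 < K ∧
      ∀ n : ℕ → ℕ, WalshLacunary q n →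
        ∀ M N : ℕ, 1 ≤ M → M < N →
          ∀ a : ℕ → ℝ,
            lpNorm p (fun t => ∑ k ∈ Finset.range M, a k * walsh (n k) t) ≤
              K * lpNorm p (fun t => ∑ k ∈ Finset.range N, a k * walsh (n k) t) := by
  have hp0 : p ≠ 0 := by linarith
  obtain ⟨B, hB⟩ : ∃ B : ℕ, (2:ℝ) ≤ q ^ B := by
    obtain ⟨B, hB⟩ := pow_unbounded_of_one_lt (2:ℝ) hq
    exact ⟨B, le_of_lt hB⟩
  refine ⟨(B:ℝ) + 1, by positivity, ?_⟩
  rintro n ⟨hn1, hnq⟩ M N hM hMN a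
  have hq0 : (0:ℝ) < q := by linarith
  have hstepn : ∀ k, n k < n (k+1) := by
    intro k
    have h1 : (1:ℝ) ≤ (n k : ℝ) := by exact_mod_cast hn1 k
    have h2 : (n k : ℝ) < n (k+1) := lt_of_lt_of_le (by nlinarith) (hnq k)
    exact_mod_cast h2
  have hmono : StrictMono n := strictMono_nat_of_lt_succ hstepn
  have hpow : ∀ k j, (q:ℝ)^j * n k ≤ n (k + j) := by
    intro k j
    induction j with
    | zero => simp
    | succ j ih =>
      calc (q:ℝ)^(j+1) * n k = q * (q^j * n k) := by ring
        _ ≤ q * n (k+j) := mul_le_mul_of_nonneg_left ih (le_of_lt hq0)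
        _ ≤ n (k+j+1) := hnq (k+j)
  set J := Nat.log 2 (n (M-1)) + 1 with hJdef
  set L := Nat.log 2 (n (N-1)) + 1 with hLdef
  have hnM1 : n (M-1) ≠ 0 := by have := hn1 (M-1); omega
  have hcastL : ((2^L : ℕ) : ℝ) = (2:ℝ)^L := by push_cast; ring
  have hJL : J ≤ L := by
    have : Nat.log 2 (n (M-1)) ≤ Nat.log 2 (n (N-1)) :=
      Nat.log_mono_right (hmono.le_iff_le.2 (by omega))
    omega
  have hkL : ∀ k, k < N → n k < 2^L := by
    intro k hk
    calc n k ≤ n (N-1) := hmono.le_iff_le.2 (by omega)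
      _ < 2^L := Nat.lt_pow_succ_log_self (by norm_num) _
  have hkJ : ∀ k, k < M → n k < 2^J := by
    intro k hk
    calc n k ≤ n (M-1) := hmono.le_iff_le.2 (by omega)
      _ < 2^J := Nat.lt_pow_succ_log_self (by norm_num) _
  have hwit : 2^J ≤ n (M - 1 + B) := by
    have h1 : (2:ℝ) * n (M-1) ≤ (q:ℝ)^B * n (M-1) := by
      apply mul_le_mul_of_nonneg_right hB (by positivity)
    have h2 : (q:ℝ)^B * n (M-1) ≤ n (M-1+B) := hpow (M-1) B
    have h3 : 2^J ≤ 2 * n (M-1) := by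
      rw [hJdef, pow_succ]
      have := Nat.pow_log_le_self 2 hnM1
      omega
    have h4 : ((2 * n (M-1) : ℕ) : ℝ) ≤ (n (M-1+B) : ℝ) := by push_cast; linarith
    have h5 : 2 * n (M-1) ≤ n (M-1+B) := by exact_mod_cast h4
    omega
  have hex : ∃ t, 2^J ≤ n t := ⟨M - 1 + B, hwit⟩
  set Mu := Nat.find hex with hMudef
  have hfind : 2^J ≤ n Mu := Nat.find_spec hex
  set M' := min N Mu with hM'def
  have hMleMu : M ≤ Mu := by
    by_contra hc
    push_neg at hc
    have h1 : n Mu ≤ n (M-1) := hmono.le_iff_le.2 (by omega)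
    have h2 : n (M-1) < 2^J := Nat.lt_pow_succ_log_self (by norm_num) _
    omega
  have hMM' : M ≤ M' := le_min (le_of_lt hMN) hMleMu
  have hM'N : M' ≤ N := min_le_left _ _
  have hM'MB : M' - M ≤ B := by
    have h1 : Mu ≤ M - 1 + B := Nat.find_min' hex hwit
    omega
  have hsmall : ∀ k, k < M' → n k < 2^J := by
    intro k hk
    have hkMu : k < Mu := lt_of_lt_of_le hk (min_le_right _ _)
    have := Nat.find_min hex hkMu
    omega
  have hbig : ∀ k, M' ≤ k → k < N → 2^J ≤ n k := by
    intro k h1 h2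
    have hMuk : Mu ≤ k := by
      rcases le_or_gt Mu N with hc | hc
      · have e : M' = Mu := min_eq_right hc
        omega
      · have e : M' = N := min_eq_left (le_of_lt hc)
        omega
    exact le_trans hfind (hmono.le_iff_le.2 hMuk)
  clear_value M' Mu
  -- block size
  set C := 2^(L-J) with hCdef
  have hCpos : 0 < C := by rw [hCdef]; positivity
  have h2L2J : 2^L = 2^J * C := by rw [hCdef, ← pow_add]; congr 1; omega
  have hCr : ((C : ℕ):ℝ) * (2:ℝ)^J = (2:ℝ)^L := by
    rw [hCdef]; push_cast; rw [← pow_add]; congr 1; omega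
  have h2Jr : (0:ℝ) < (2:ℝ)^J := by positivity
  have h2Lr : (0:ℝ) < (2:ℝ)^L := by positivity
  have hptlow : ∀ b r' : ℕ, b*C ≤ r' → ((b:ℝ)/2^J ≤ (r':ℝ)/2^L) := by
    intro b r' h
    rw [div_le_div_iff₀ h2Jr h2Lr]
    have hc : ((b*C:ℕ):ℝ) ≤ (r':ℝ) := Nat.cast_le.2 h
    push_cast at hc
    calc (b:ℝ) * 2^L = ((b:ℝ)*(C:ℝ))*2^J := by rw [← hCr]; ring
      _ ≤ (r':ℝ)*2^J := mul_le_mul_of_nonneg_right hc (le_of_lt h2Jr)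
  have hpthigh : ∀ b r' : ℕ, r' < (b+1)*C → ((r':ℝ)/2^L < ((b:ℝ)+1)/2^J) := by
    intro b r' h
    rw [div_lt_div_iff₀ h2Lr h2Jr]
    have hc : (r':ℝ) < (((b+1)*C:ℕ):ℝ) := Nat.cast_lt.2 h
    push_cast at hc
    calc (r':ℝ) * 2^J < (((b:ℝ)+1)*(C:ℝ))*2^J :=
          mul_lt_mul_of_pos_right hc h2Jr
      _ = ((b:ℝ)+1) * 2^L := by rw [← hCr]; ring
  set ω : ℕ → ℕ → ℝ := fun k r => walshD (n k) ((r:ℝ)/2^L) with hω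
  have hblockzero : ∀ k, M' ≤ k → k < N → ∀ b : ℕ,
      ∑ r ∈ Finset.Ico (b*C) ((b+1)*C), ω k r = 0 := by
    intro k h1 h2 b
    have hconstk : ∀ r : ℕ, ∀ t : ℝ, (r:ℝ)/2^L ≤ t → t < ((r:ℝ)+1)/2^L →
        walshD (n k) t = walshD (n k) ((r:ℝ)/2^L) :=
      fun r t ha hb => walshD_const (hkL k h2) r ha hb
    have hi1 := integral_step hJL hconstk b
    have hnk0 : n k ≠ 0 := by have := hn1 k; omega
    have hi2 := integral_walshD_zero hnk0 (hbig k h1 h2) b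
    rw [hi2] at hi1
    rcases mul_eq_zero.1 hi1.symm with h | h
    · exact absurd h (by positivity)
    · exact h
  -- the three vector functions
  set G : ℕ → ℝ := fun r => ∑ k ∈ Finset.range N, a k * ω k r with hGdef
  set F' : ℕ → ℝ := fun r => ∑ k ∈ Finset.range M', a k * ω k r with hF'def
  set F : ℕ → ℝ := fun r => ∑ k ∈ Finset.range M, a k * ω k r with hFdef
  -- identification of lpNorm with dnorm
  have hlp : ∀ s : ℕ, (∀ k, k < s → n k < 2^L) →
      lpNorm p (fun t => ∑ k ∈ Finset.range s, a k * walsh (n k) t) =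
      dnorm p L (fun r => ∑ k ∈ Finset.range s, a k * ω k r) := by
    intro s hs
    have hae : ∀ᵐ t : ℝ, |∑ k ∈ Finset.range s, a k * walsh (n k) t| ^ p
        = |∑ k ∈ Finset.range s, a k * walshD (n k) t| ^ p := by
      filter_upwards [walsh_ae] with t ht
      congr 2
      exact Finset.sum_congr rfl fun k _ => by rw [ht (n k)]
    have e1 : lpNorm p (fun t => ∑ k ∈ Finset.range s, a k * walsh (n k) t)
        = lpNorm p (fun t => ∑ k ∈ Finset.range s, a k * walshD (n k) t) := by
      rw [_root_.lpNorm, _root_.lpNorm]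
      congr 1
      exact MeasureTheory.integral_congr_ae (MeasureTheory.ae_restrict_of_ae hae)
    rw [e1, _root_.lpNorm, dnorm]
    congr 1
    exact integral_Icc_step
      (f := fun t => |∑ k ∈ Finset.range s, a k * walshD (n k) t| ^ p)
      (fun r t h1 h2 => by
        have hsx : (∑ k ∈ Finset.range s, a k * walshD (n k) t)
            = ∑ k ∈ Finset.range s, a k * walshD (n k) ((r:ℝ)/2^L) :=
          Finset.sum_congr rfl fun k hk => by
            rw [walshD_const (hs k (Finset.mem_range.1 hk)) r h1 h2]
        rw [hsx])
  -- conditional expectation inequality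
  have hcond : ∑ r ∈ Finset.range (2^L), |F' r|^p ≤ ∑ r ∈ Finset.range (2^L), |G r|^p := by
    rw [h2L2J, sum_blocks, sum_blocks]
    apply Finset.sum_le_sum
    intro b _
    have hcard : (Finset.Ico (b*C) ((b+1)*C)).card = C := by
      rw [Nat.card_Ico, Nat.succ_mul, Nat.add_sub_cancel_left]
    have hF'c : ∀ r, b*C ≤ r → r < (b+1)*C → F' r = ∑ k ∈ Finset.range M', a k * walshD (n k) ((b:ℝ)/2^J) := by
      intro r h1 h2
      simp only [hF'def]
      exact Finset.sum_congr rfl fun k hk => by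
        simp only [hω]
        rw [walshD_const (hsmall k (Finset.mem_range.1 hk)) b (hptlow b r h1) (hpthigh b r h2)]
    have hF'b : ∀ r ∈ Finset.Ico (b*C) ((b+1)*C), F' r = F' (b*C) := by
      intro r hr
      rw [Finset.mem_Ico] at hr
      rw [hF'c r hr.1 hr.2, hF'c (b*C) (le_refl _) (by nlinarith [hCpos])]
    have hGF : ∑ r ∈ Finset.Ico (b*C) ((b+1)*C), G r
        = ∑ r ∈ Finset.Ico (b*C) ((b+1)*C), F' r := by
      have hsplit : ∀ r : ℕ, G r = F' r + ∑ k ∈ Finset.Ico M' N, a k * ω k r := by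
        intro r
        simp only [hGdef, hF'def]
        rw [Finset.range_eq_Ico, Finset.range_eq_Ico,
          ← Finset.sum_Ico_consecutive (fun k => a k * ω k r) (Nat.zero_le M') hM'N]
      rw [Finset.sum_congr rfl fun r _ => hsplit r, Finset.sum_add_distrib]
      have hz : ∑ r ∈ Finset.Ico (b*C) ((b+1)*C), ∑ k ∈ Finset.Ico M' N, a k * ω k r = 0 := by
        rw [Finset.sum_comm]
        apply Finset.sum_eq_zero
        intro k hk
        rw [Finset.mem_Ico] at hk
        rw [← Finset.mul_sum, hblockzero k hk.1 hk.2 b, mul_zero]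
      rw [hz, add_zero]
    have hFsum : ∑ r ∈ Finset.Ico (b*C) ((b+1)*C), |F' r|^p = (C:ℝ) * |F' (b*C)|^p := by
      rw [Finset.sum_congr rfl fun r hr => by rw [hF'b r hr], Finset.sum_const, hcard,
        nsmul_eq_mul]
    have hsumF' : ∑ r ∈ Finset.Ico (b*C) ((b+1)*C), F' r = (C:ℝ) * F' (b*C) := by
      rw [Finset.sum_congr rfl hF'b, Finset.sum_const, hcard, nsmul_eq_mul]
    have hCr0 : ((C:ℕ):ℝ) ≠ 0 := Nat.cast_ne_zero.2 (by omega)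
    have hvalbound : |F' (b*C)| ≤ (C:ℝ)⁻¹ * ∑ r ∈ Finset.Ico (b*C) ((b+1)*C), |G r| := by
      have he : F' (b*C) = (C:ℝ)⁻¹ * ∑ r ∈ Finset.Ico (b*C) ((b+1)*C), G r := by
        rw [hGF, hsumF']
        field_simp
      rw [he, abs_mul, abs_of_pos (by positivity)]
      exact mul_le_mul_of_nonneg_left (Finset.abs_sum_le_sum_abs _ _) (by positivity)
    calc ∑ r ∈ Finset.Ico (b*C) ((b+1)*C), |F' r|^p = (C:ℝ) * |F' (b*C)|^p := hFsum
      _ ≤ (C:ℝ) * ((C:ℝ)⁻¹ * ∑ r ∈ Finset.Ico (b*C) ((b+1)*C), |G r|)^p := by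
          apply mul_le_mul_of_nonneg_left _ (by positivity)
          exact Real.rpow_le_rpow (abs_nonneg _) hvalbound (by linarith)
      _ ≤ (C:ℝ) * ((C:ℝ)⁻¹ * ∑ r ∈ Finset.Ico (b*C) ((b+1)*C), |G r|^p) := by
          apply mul_le_mul_of_nonneg_left _ (by positivity)
          have hj := jensen_mean hp (Finset.Ico (b*C) ((b+1)*C)) G (by rw [hcard]; omega)
          rw [hcard] at hj
          exact hj
      _ = ∑ r ∈ Finset.Ico (b*C) ((b+1)*C), |G r|^p := by
          field_simp
  -- coefficient bound
  have hcoef : ∀ k0, k0 < N → |a k0| ≤ dnorm p L G := by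
    intro k0 hk0
    have horth : ∀ k, k < N → ∑ r ∈ Finset.range (2^L), ω k r * ω k0 r
        = if k = k0 then (2:ℝ)^L else 0 := by
      intro k hk
      have hprod : ∀ r : ℕ, ω k r * ω k0 r = walshD ((n k) ^^^ (n k0)) ((r:ℝ)/2^L) :=
        fun r => walshD_mul (hkL k hk) (hkL k0 hk0) _
      rw [Finset.sum_congr rfl fun r _ => hprod r]
      rcases eq_or_ne k k0 with he | hne
      · subst he
        rw [if_pos rfl]
        simp only [Nat.xor_self, walshD_zero]
        rw [Finset.sum_const, Finset.card_range, nsmul_eq_mul, mul_one, hcastL]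
      · rw [if_neg hne]
        have hxne : n k ^^^ n k0 ≠ 0 := by
          rw [Ne, xor_eq_zero_iff]
          exact fun h => hne (hmono.injective h)
        exact sum_walshD_zero hxne (Nat.xor_lt_two_pow (hkL k hk) (hkL k0 hk0))
    have hsum : ∑ r ∈ Finset.range (2^L), G r * ω k0 r = a k0 * 2^L := by
      calc ∑ r ∈ Finset.range (2^L), G r * ω k0 r
          = ∑ k ∈ Finset.range N, a k * ∑ r ∈ Finset.range (2^L), ω k r * ω k0 r := by
            simp only [hGdef, Finset.sum_mul]
            rw [Finset.sum_comm]
            exact Finset.sum_congr rfl fun k _ => by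
              rw [Finset.mul_sum]
              exact Finset.sum_congr rfl fun r _ => by ring
        _ = ∑ k ∈ Finset.range N, a k * (if k = k0 then (2:ℝ)^L else 0) :=
            Finset.sum_congr rfl fun k hk => by rw [horth k (Finset.mem_range.1 hk)]
        _ = a k0 * 2^L := by
            rw [Finset.sum_congr rfl (g := fun k => if k = k0 then a k * (2:ℝ)^L else 0)
              (fun k _ => by by_cases h : k = k0 <;> simp [h])]
            rw [Finset.sum_ite_eq' (Finset.range N) k0 (fun k => a k * (2:ℝ)^L)]
            rw [if_pos (Finset.mem_range.2 hk0)]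
    have habs : |a k0| ≤ ((2:ℝ)^L)⁻¹ * ∑ r ∈ Finset.range (2^L), |G r| := by
      have he : a k0 = ((2:ℝ)^L)⁻¹ * ∑ r ∈ Finset.range (2^L), G r * ω k0 r := by
        rw [hsum]; field_simp
      rw [he, abs_mul, abs_of_pos (by positivity)]
      apply mul_le_mul_of_nonneg_left _ (by positivity)
      calc |∑ r ∈ Finset.range (2^L), G r * ω k0 r|
          ≤ ∑ r ∈ Finset.range (2^L), |G r * ω k0 r| := Finset.abs_sum_le_sum_abs _ _
        _ = ∑ r ∈ Finset.range (2^L), |G r| := Finset.sum_congr rfl fun r _ => by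
            rw [abs_mul]
            simp only [hω]
            rw [walshD_abs, mul_one]
    have hj := jensen_mean hp (Finset.range (2^L)) G (by rw [Finset.card_range]; positivity)
    rw [Finset.card_range, hcastL] at hj
    have he2 : |a k0| = (|a k0| ^ p) ^ (1/p) := by
      rw [one_div, Real.rpow_rpow_inv (abs_nonneg _) hp0]
    rw [he2, dnorm]
    apply Real.rpow_le_rpow (Real.rpow_nonneg (abs_nonneg _) p) ?_ (by positivity)
    calc |a k0|^p ≤ (((2:ℝ)^L)⁻¹ * ∑ r ∈ Finset.range (2^L), |G r|)^p :=
          Real.rpow_le_rpow (abs_nonneg _) habs (by linarith)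
      _ ≤ ((2:ℝ)^L)⁻¹ * ∑ r ∈ Finset.range (2^L), |G r|^p := hj
  -- single-term norms
  have hsingle : ∀ k, dnorm p L (fun r => -(a k) * ω k r) = |a k| := by
    intro k
    rw [dnorm]
    have habs1 : ∀ r : ℕ, |-(a k) * ω k r| ^ p = |a k| ^ p := by
      intro r
      rw [abs_mul, abs_neg]
      simp only [hω]
      rw [walshD_abs, mul_one]
    rw [Finset.sum_congr rfl fun r _ => habs1 r, Finset.sum_const, Finset.card_range,
      nsmul_eq_mul, hcastL, inv_mul_cancel_left₀ (by positivity : ((2:ℝ)^L) ≠ 0)]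
    rw [one_div, Real.rpow_rpow_inv (abs_nonneg _) hp0]
  -- Minkowski decomposition
  have hsplitF : F = fun r => F' r + ∑ k ∈ Finset.Ico M M', -(a k) * ω k r := by
    funext r
    simp only [hFdef, hF'def]
    rw [Finset.range_eq_Ico, Finset.range_eq_Ico,
      ← Finset.sum_Ico_consecutive (fun k => a k * ω k r) (Nat.zero_le M) hMM']
    simp only [neg_mul]
    rw [Finset.sum_neg_distrib]
    ring
  -- final chain
  have hdnG : 0 ≤ dnorm p L G := dnorm_nonneg p L G
  have hcardMM' : ((Finset.Ico M M').card : ℝ) ≤ (B:ℝ) := by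
    rw [Nat.card_Ico]
    exact_mod_cast hM'MB
  have hmain : dnorm p L F ≤ ((B:ℝ)+1) * dnorm p L G := by
    have h1 : dnorm p L F ≤ dnorm p L F' + ∑ k ∈ Finset.Ico M M', |a k| := by
      rw [hsplitF]
      refine le_trans (dnorm_sum hp L F' (fun k r => -(a k) * ω k r) (Finset.Ico M M')) ?_
      apply add_le_add_right
      exact Finset.sum_le_sum fun k _ => le_of_eq (hsingle k)
    have h2 : dnorm p L F' ≤ dnorm p L G := dnorm_mono hp L hcond
    have h3 : ∑ k ∈ Finset.Ico M M', |a k| ≤ (B:ℝ) * dnorm p L G := by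
      calc ∑ k ∈ Finset.Ico M M', |a k| ≤ ∑ k ∈ Finset.Ico M M', dnorm p L G := by
            apply Finset.sum_le_sum
            intro k hk
            rw [Finset.mem_Ico] at hk
            exact hcoef k (lt_of_lt_of_le hk.2 hM'N)
        _ = ((Finset.Ico M M').card : ℝ) * dnorm p L G := by
            rw [Finset.sum_const, nsmul_eq_mul]
        _ ≤ (B:ℝ) * dnorm p L G := mul_le_mul_of_nonneg_right hcardMM' hdnG
    linarith
  rw [hlp M (fun k hk => hkL k (lt_trans hk hMN)), hlp N hkL]
  exact hmain
end

section
/- (Square-sum bound for lacunary Walsh coefficients of L^p functions) Let 1 < p < ∞ and q > 1. There exists a constant C = C(p,q) > 0 such that for every q-lacunary sequence (w_{n_k}) of Walsh functions and every f ∈ L^p([0,1]), (Σ_{k≥1} (∫_0^1 f w_{n_k} dm)²)^{1/2} ≤ C · ‖f‖_{L^p([0,1])}. -/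
open MeasureTheory Real Set Filter

section AuxWalsh
open Pointwise

lemma rademacher_measurable (k : ℕ) : Measurable (rademacher k) := by
  have : Measurable (Real.sign) := by
    have : Real.sign = fun x : ℝ => if x < 0 then (-1:ℝ) else if 0 < x then 1 else 0 := by
      ext x; rw [Real.sign]
    rw [this]
    exact Measurable.ite measurableSet_Iio measurable_const
      (Measurable.ite measurableSet_Ioi measurable_const measurable_const)
  exact this.comp ((Real.continuous_sin.measurable).comp (measurable_id.const_mul _))

lemma rademacher_abs_le (k : ℕ) (t : ℝ) : |rademacher k t| ≤ 1 := by
  rw [rademacher]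
  rcases Real.sign_apply_eq (Real.sin (2 ^ k * Real.pi * t)) with h | h | h <;> rw [h] <;> norm_num

lemma walsh_measurable (k : ℕ) : Measurable (walsh k) := by
  apply Finset.measurable_prod
  intro i _
  by_cases h : Nat.testBit k i <;> simp [h, rademacher_measurable]

lemma walsh_abs_le (k : ℕ) (t : ℝ) : |walsh k t| ≤ 1 := by
  rw [walsh, Finset.abs_prod]
  apply Finset.prod_le_one
  · intro i _; positivity
  · intro i _
    by_cases h : Nat.testBit k i <;> simp [h, rademacher_abs_le]

lemma rademacher_eq_on {i j : ℕ} {t : ℝ}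
    (ht : t ∈ Set.Ioo ((j : ℝ) / 2 ^ i) ((j + 1 : ℕ) / 2 ^ i)) :
    rademacher i t = (-1) ^ j := by
  obtain ⟨h1, h2⟩ := ht
  have h2p : (0:ℝ) < 2 ^ i := by positivity
  have hx1 : (j : ℝ) * Real.pi < 2 ^ i * Real.pi * t := by
    rw [mul_comm ((2:ℝ)^i) Real.pi, mul_assoc]
    have : (j:ℝ) < 2 ^ i * t := by
      rw [div_lt_iff₀ h2p] at h1; nlinarith
    nlinarith [Real.pi_pos]
  have hx2 : 2 ^ i * Real.pi * t < (j + 1 : ℝ) * Real.pi := by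
    rw [mul_comm ((2:ℝ)^i) Real.pi, mul_assoc]
    have : 2 ^ i * t < (j:ℝ) + 1 := by
      rw [lt_div_iff₀ h2p] at h2; push_cast at h2 ⊢; nlinarith
    nlinarith [Real.pi_pos]
  set x := 2 ^ i * Real.pi * t with hx
  have key : Real.sin x = (-1) ^ j * Real.sin (x - j * Real.pi) := by
    have := Real.sin_add_int_mul_pi (x - j * Real.pi) (j : ℤ)
    push_cast at this
    simp only [sub_add_cancel] at this
    rw [this, zpow_natCast]
  have hs : 0 < Real.sin (x - j * Real.pi) := by
    apply Real.sin_pos_of_pos_of_lt_pi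
    · linarith
    · push_cast at hx2; linarith
  rw [rademacher, key]
  rcases Nat.even_or_odd j with he | ho
  · rw [he.neg_one_pow]
    rw [one_mul, Real.sign_of_pos hs]
  · rw [ho.neg_one_pow]
    rw [neg_one_mul, Real.sign_of_neg (by linarith)]

noncomputable def walshAux (K k : ℕ) (t : ℝ) : ℝ :=
  ∏ i ∈ Finset.range K, if Nat.testBit k i then rademacher (i + 1) t else 1

lemma walshAux_congr {K K' k : ℕ} (h : K ≤ K') (hk : k < 2 ^ K) (t : ℝ) :
    walshAux K k t = walshAux K' k t := by
  rw [walshAux, walshAux]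
  apply Finset.prod_subset (Finset.range_subset_range.mpr h)
  intro i _ hi
  rw [Finset.mem_range, not_lt] at hi
  rw [Nat.testBit_eq_false_of_lt (lt_of_lt_of_le hk (Nat.pow_le_pow_right (by norm_num) hi))]
  simp

lemma walsh_eq_walshAux {K k : ℕ} (hk : k < 2 ^ K) (t : ℝ) :
    walsh k t = walshAux K k t := by
  have h1 : walsh k t = walshAux k k t := rfl
  rcases le_total k K with h | h
  · rw [h1, walshAux_congr h Nat.lt_two_pow_self t]
  · rw [h1, walshAux_congr h hk t]

noncomputable def walshVal (K k j : ℕ) : ℝ :=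
  ∏ i ∈ Finset.range K, if Nat.testBit k i then (-1 : ℝ) ^ (j / 2 ^ (K - 1 - i)) else 1

lemma walsh_apply_Ioo {K k j : ℕ} (hk : k < 2 ^ K)
    {t : ℝ} (ht : t ∈ Set.Ioo ((j : ℝ) / 2 ^ K) ((j + 1 : ℕ) / 2 ^ K)) :
    walsh k t = walshVal K k j := by
  rw [walsh_eq_walshAux hk, walshAux, walshVal]
  apply Finset.prod_congr rfl
  intro i hi
  rw [Finset.mem_range] at hi
  by_cases hb : Nat.testBit k i
  · rw [if_pos hb, if_pos hb]
    set d : ℕ := 2 ^ (K - 1 - i) with hd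
    set q : ℕ := j / d with hq
    have hdK : 2 ^ (i + 1) * d = 2 ^ K := by
      rw [hd, ← pow_add]
      congr 1
      omega
    apply rademacher_eq_on (j := q)
    have hd0 : 0 < d := Nat.pow_pos (by norm_num)
    have h1 : q * d ≤ j := Nat.div_mul_le_self j d
    have h2 : j + 1 ≤ (q + 1) * d := by
      have h3 := Nat.div_add_mod j d
      have h4 := Nat.mod_lt j hd0
      rw [← hq] at h3
      nlinarith
    have e2K : (0:ℝ) < 2 ^ K := by positivity
    have e2i : (0:ℝ) < 2 ^ (i+1) := by positivity
    have hdKR : (2:ℝ) ^ (i+1) * (d:ℝ) = (2:ℝ) ^ K := by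
      rw [show ((2:ℝ)^(i+1) * (d:ℝ)) = ((2^(i+1) * d : ℕ) : ℝ) by push_cast [hd]; ring, hdK]
      push_cast; ring
    constructor
    · calc ((q:ℝ)) / 2 ^ (i+1) ≤ (j : ℝ) / 2 ^ K := by
            rw [div_le_div_iff₀ e2i e2K]
            have : ((q * d : ℕ) : ℝ) * 2 ^ (i+1) ≤ (j:ℝ) * 2 ^ (i+1) := by
              have : ((q*d : ℕ):ℝ) ≤ (j:ℝ) := Nat.cast_le.mpr h1
              nlinarith
            calc (q:ℝ) * 2 ^ K = ((q * d : ℕ) : ℝ) * 2 ^ (i+1) := by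
                  push_cast; rw [← hdKR]; ring
              _ ≤ (j:ℝ) * 2 ^ (i+1) := this
        _ < t := ht.1
    · calc t < ((j + 1 : ℕ) : ℝ) / 2 ^ K := ht.2
        _ ≤ ((q + 1 : ℕ) : ℝ) / 2 ^ (i+1) := by
            rw [div_le_div_iff₀ e2K e2i]
            calc ((j + 1 : ℕ) : ℝ) * 2 ^ (i+1) ≤ (((q+1) * d : ℕ) : ℝ) * 2 ^ (i+1) := by
                  have : ((j+1 : ℕ):ℝ) ≤ (((q+1)*d : ℕ):ℝ) := Nat.cast_le.mpr h2
                  nlinarith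
              _ = ((q + 1 : ℕ) : ℝ) * 2 ^ K := by push_cast; rw [← hdKR]; ring
  · rw [if_neg hb, if_neg hb]

lemma walshVal_flip {K k l : ℕ} (hK : 1 ≤ K) (hb : Nat.testBit k (K - 1) = true) :
    walshVal K k (2 * l + 1) = - walshVal K k (2 * l) := by
  obtain ⟨K', rfl⟩ : ∃ K', K = K' + 1 := ⟨K - 1, by omega⟩
  rw [walshVal, walshVal, Finset.prod_range_succ, Finset.prod_range_succ]
  simp only [Nat.add_sub_cancel] at hb ⊢
  rw [hb]
  have hlow : ∀ i ∈ Finset.range K',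
      (if Nat.testBit k i then (-1 : ℝ) ^ ((2*l+1) / 2 ^ (K' - i)) else 1) =
      (if Nat.testBit k i then (-1 : ℝ) ^ ((2*l) / 2 ^ (K' - i)) else 1) := by
    intro i hi
    rw [Finset.mem_range] at hi
    have hdiv : (2*l+1) / 2 ^ (K' - i) = (2*l) / 2 ^ (K' - i) := by
      obtain ⟨d, hd⟩ : ∃ d, K' - i = d + 1 := ⟨K' - i - 1, by omega⟩
      rw [hd, pow_succ, show (2:ℕ)^d*2 = 2*2^d by ring, ← Nat.div_div_eq_div_mul,
        ← Nat.div_div_eq_div_mul]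
      congr 1
      omega
    rw [hdiv]
  rw [Finset.prod_congr rfl hlow]
  simp only [Nat.sub_self, pow_zero, Nat.div_one, if_true, pow_succ]
  ring

lemma sum_range_two_mul (n : ℕ) (g : ℕ → ℝ) :
    ∑ j ∈ Finset.range (2 * n), g j = ∑ l ∈ Finset.range n, (g (2 * l) + g (2 * l + 1)) := by
  induction n with
  | zero => simp
  | succ n ih =>
      rw [show 2 * (n + 1) = (2 * n + 1) + 1 by ring, Finset.sum_range_succ,
        Finset.sum_range_succ, ih, Finset.sum_range_succ]
      ring

lemma walsh_intervalIntegrable (k : ℕ) (a b : ℝ) :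
    IntervalIntegrable (walsh k) volume a b := by
  rw [intervalIntegrable_iff]
  apply Integrable.mono' (g := fun _ => (1:ℝ))
  · rw [show (fun _ : ℝ => (1:ℝ)) = fun _ : ℝ => (1:ℝ) from rfl]
    refine integrableOn_const (ne_of_lt ?_)
    calc volume (Set.uIoc a b) ≤ volume (Set.Icc (min a b) (max a b)) := by
          apply measure_mono
          rw [Set.uIoc]
          exact Set.Ioc_subset_Icc_self
      _ < ⊤ := by rw [Real.volume_Icc]; exact ENNReal.ofReal_lt_top
  · exact (walsh_measurable k).aestronglyMeasurable.restrict
  · exact Eventually.of_forall fun t => by simpa using walsh_abs_le k t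

lemma walsh_integral_zero {k : ℕ} (hk : 1 ≤ k) :
    ∫ t in Set.Icc (0:ℝ) 1, walsh k t = 0 := by
  set K := Nat.size k with hKdef
  have hkK : k < 2 ^ K := Nat.lt_size_self k
  have hK1 : 1 ≤ K := Nat.size_pos.mpr hk
  have hlow : 2 ^ (K - 1) ≤ k := by
    by_contra h
    push_neg at h
    have := Nat.size_le.mpr h
    omega
  have hTop : Nat.testBit k (K - 1) = true := by
    rw [Nat.testBit_eq_decide_div_mod_eq]
    have hdiv : k / 2 ^ (K - 1) = 1 := by
      apply Nat.div_eq_of_lt_le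
      · simpa using hlow
      · have : 2 ^ K = 2 * 2 ^ (K - 1) := by
          rw [← pow_succ']
          congr 1
          omega
        omega
    simp [hdiv]
  have h2K : (0:ℝ) < 2 ^ K := by positivity
  set a : ℕ → ℝ := fun j => (j : ℝ) / 2 ^ K with ha
  have piece : ∀ j : ℕ, ∫ t in (a j)..(a (j+1)), walsh k t = walshVal K k j * (1 / 2 ^ K) := by
    intro j
    have hle : a j ≤ a (j + 1) := by
      simp only [ha]
      gcongr
      push_cast
      linarith
    rw [intervalIntegral.integral_of_le hle, integral_Ioc_eq_integral_Ioo]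
    have heq : Set.EqOn (walsh k) (fun _ => walshVal K k j) (Set.Ioo (a j) (a (j+1))) := by
      intro t ht
      apply walsh_apply_Ioo hkK
      simpa [ha] using ht
    rw [setIntegral_congr_fun measurableSet_Ioo heq, setIntegral_const, measureReal_def, Real.volume_Ioo]
    rw [smul_eq_mul, mul_comm]
    congr 1
    rw [ENNReal.toReal_ofReal (by linarith)]
    rw [ha]
    push_cast
    field_simp
    ring
  have hsplit : (2:ℕ) ^ K = 2 * 2 ^ (K - 1) := by
    rw [← pow_succ']
    congr 1
    omega
  calc ∫ t in Set.Icc (0:ℝ) 1, walsh k t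
      = ∫ t in (a 0)..(a (2 ^ K)), walsh k t := by
        rw [show a 0 = 0 by simp [ha], show a (2 ^ K) = 1 by
          rw [ha]; push_cast; exact div_self (ne_of_gt h2K)]
        rw [intervalIntegral.integral_of_le zero_le_one, integral_Icc_eq_integral_Ioc]
    _ = ∑ j ∈ Finset.range (2 ^ K), ∫ t in (a j)..(a (j+1)), walsh k t :=
        (intervalIntegral.sum_integral_adjacent_intervals
          (fun j _ => walsh_intervalIntegrable k _ _)).symm
    _ = ∑ j ∈ Finset.range (2 ^ K), walshVal K k j * (1 / 2 ^ K) :=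
        Finset.sum_congr rfl fun j _ => piece j
    _ = 0 := by
        rw [hsplit, sum_range_two_mul]
        apply Finset.sum_eq_zero
        intro l _
        rw [walshVal_flip hK1 hTop]
        ring

def goodSet : Set ℝ := {t | ∀ i : ℕ, Real.sin (2 ^ i * Real.pi * t) ≠ 0}

lemma goodSet_ae : ∀ᵐ t ∂(volume.restrict (Set.Icc (0:ℝ) 1)), t ∈ goodSet := by
  have : volume goodSetᶜ = 0 := by
    have hc : goodSetᶜ.Countable := by
      have : goodSetᶜ ⊆ ⋃ i : ℕ, ⋃ n : ℤ, {((n : ℝ) / 2 ^ i)} := by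
        intro t ht
        simp only [goodSet, Set.mem_compl_iff, Set.mem_setOf_eq, not_forall, not_not] at ht
        obtain ⟨i, hi⟩ := ht
        rw [Real.sin_eq_zero_iff] at hi
        obtain ⟨n, hn⟩ := hi
        refine Set.mem_iUnion.mpr ⟨i, Set.mem_iUnion.mpr ⟨n, ?_⟩⟩
        simp only [Set.mem_singleton_iff]
        have h2 : (0:ℝ) < 2 ^ i := by positivity
        field_simp
        rw [mul_comm ((2:ℝ)^i) Real.pi, mul_assoc] at hn
        have hpi := Real.pi_pos
        have : (n:ℝ) = 2 ^ i * t := by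
          have := mul_right_cancel₀ (ne_of_gt hpi) (by linarith [hn] : (n:ℝ) * π = (2^i * t) * π)
          exact this
        linarith
      exact Set.Countable.mono this (Set.countable_iUnion fun i =>
        Set.countable_iUnion fun n => Set.countable_singleton _)
    exact Set.Countable.measure_zero hc volume
  have h0 : (volume.restrict (Set.Icc (0:ℝ) 1)) goodSetᶜ = 0 :=
    le_antisymm (le_trans (Measure.restrict_apply_le _ _) this.le) zero_le
  rw [ae_iff]
  exact h0

lemma rademacher_sq {i : ℕ} {t : ℝ} (ht : t ∈ goodSet) :
    rademacher i t * rademacher i t = 1 := by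
  rcases Real.sign_apply_eq_of_ne_zero _ (ht i) with h | h <;>
    rw [rademacher, h] <;> norm_num

lemma walsh_mul {x y : ℕ} {t : ℝ} (ht : t ∈ goodSet) :
    walsh x t * walsh y t = walsh (x ^^^ y) t := by
  set K := max x y + 1 with hK
  have hx : x < 2 ^ K := by
    calc x ≤ max x y := le_max_left x y
      _ < 2 ^ (max x y) := Nat.lt_two_pow_self
      _ ≤ 2 ^ K := Nat.pow_le_pow_right (by norm_num) (by omega)
  have hy : y < 2 ^ K := by
    calc y ≤ max x y := le_max_right x y
      _ < 2 ^ (max x y) := Nat.lt_two_pow_self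
      _ ≤ 2 ^ K := Nat.pow_le_pow_right (by norm_num) (by omega)
  have hxy : x ^^^ y < 2 ^ K := Nat.xor_lt_two_pow hx hy
  rw [walsh_eq_walshAux hx, walsh_eq_walshAux hy, walsh_eq_walshAux hxy,
    walshAux, walshAux, walshAux, ← Finset.prod_mul_distrib]
  apply Finset.prod_congr rfl
  intro i _
  rw [Nat.testBit_xor]
  by_cases h1 : Nat.testBit x i <;> by_cases h2 : Nat.testBit y i <;>
    simp [h1, h2, rademacher_sq ht]

lemma walsh_zero (t : ℝ) : walsh 0 t = 1 := by simp [walsh]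

instance : Std.Commutative (α := ℕ) (· ^^^ ·) := ⟨Nat.xor_comm⟩

instance : Std.Associative (α := ℕ) (· ^^^ ·) := ⟨Nat.xor_assoc⟩

def xorSum {ι : Type*} (s : Finset ι) (a : ι → ℕ) : ℕ :=
  s.fold (· ^^^ ·) 0 a

@[simp] lemma xorSum_empty {ι : Type*} (a : ι → ℕ) : xorSum ∅ a = 0 := rfl

lemma xorSum_insert {ι : Type*} [DecidableEq ι] {s : Finset ι} {i : ι} (h : i ∉ s) (a : ι → ℕ) :
    xorSum (insert i s) a = a i ^^^ xorSum s a := Finset.fold_insert h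

lemma walsh_prod {ι : Type*} [DecidableEq ι] (s : Finset ι) (a : ι → ℕ) {t : ℝ}
    (ht : t ∈ goodSet) : ∏ j ∈ s, walsh (a j) t = walsh (xorSum s a) t := by
  induction s using Finset.induction_on with
  | empty => simp [walsh_zero]
  | insert _ _ h ih =>
      rw [Finset.prod_insert h, ih, xorSum_insert h, walsh_mul ht]

lemma xorSum_lt_two_pow {ι : Type*} [DecidableEq ι] {s : Finset ι} {a : ι → ℕ} {T : ℕ}
    (h : ∀ j ∈ s, a j < 2 ^ T) : xorSum s a < 2 ^ T := by
  induction s using Finset.induction_on with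
  | empty => simpa using Nat.pos_pow_of_pos T (by norm_num)
  | @insert j s' hj ih =>
      rw [xorSum_insert hj]
      exact Nat.xor_lt_two_pow (h j (Finset.mem_insert_self j s'))
        (ih fun i hi => h i (Finset.mem_insert_of_mem hi))

section Lacunary

variable {n : ℕ → ℕ} (hn1 : ∀ k, 1 ≤ n k) (hl : ∀ k, 2 * n k ≤ n (k + 1))

include hn1 hl in

lemma lacunary_mono : ∀ {j k : ℕ}, j ≤ k → n j ≤ n k := by
  intro j k hjk
  induction k, hjk using Nat.le_induction with
  | base => exact le_refl (n j)
  | succ k hjk ih =>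
      have h1 := hl k
      have h2 := hn1 k
      omega

include hn1 hl in

lemma lacunary_double {j k : ℕ} (h : j < k) : 2 * n j ≤ n k := by
  have h1 : n j ≤ n (k - 1) := lacunary_mono hn1 hl (by omega)
  have h2 := hl (k - 1)
  have : k - 1 + 1 = k := by omega
  rw [this] at h2
  omega

include hn1 hl in

lemma lacunary_xorSum_ne_zero : ∀ {s : Finset ℕ}, s.Nonempty → xorSum s n ≠ 0 := by
  intro s
  induction s using Finset.induction_on_max with
  | empty => intro h; simp at h
  | insert a s ha _ =>
      intro _
      have has : a ∉ s := fun h => lt_irrefl a (ha a h)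
      rw [xorSum_insert has]
      set T : ℕ := Nat.size (n a) - 1 with hT
      have hs1 : 1 ≤ Nat.size (n a) := Nat.size_pos.mpr (hn1 a)
      have hup : n a < 2 ^ (T + 1) := by
        have := Nat.lt_size_self (n a)
        have : Nat.size (n a) = T + 1 := by omega
        rw [← this]
        exact Nat.lt_size_self (n a)
      have hlow : 2 ^ T ≤ n a := by
        by_contra h
        push_neg at h
        have := Nat.size_le.mpr h
        omega
      have hsmall : ∀ j ∈ s, n j < 2 ^ T := by
        intro j hj
        have := lacunary_double hn1 hl (ha j hj)
        have h2 : 2 ^ (T+1) = 2 * 2 ^ T := by rw [pow_succ]; ring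
        omega
      have hx : xorSum s n < 2 ^ T := xorSum_lt_two_pow hsmall
      intro hzero
      replace hzero : n a = xorSum s n := by
        simpa [Nat.xor_assoc] using congrArg (· ^^^ xorSum s n) hzero
      omega

include hn1 hl in

lemma integral_walsh_pow_prod (N : ℕ) (e : ℕ → ℕ) :
    ∫ t in Set.Icc (0:ℝ) 1, ∏ k ∈ Finset.range N, (walsh (n k) t) ^ (e k) =
      if ∀ k ∈ Finset.range N, Even (e k) then 1 else 0 := by
  set s : Finset ℕ := (Finset.range N).filter (fun k => ¬ Even (e k)) with hs
  have key : ∀ t ∈ goodSet,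
      ∏ k ∈ Finset.range N, (walsh (n k) t) ^ (e k) = walsh (xorSum s n) t := by
    intro t ht
    rw [← walsh_prod s n ht, hs, Finset.prod_filter]
    apply Finset.prod_congr rfl
    intro k _
    by_cases he : Even (e k)
    · rw [if_neg (by simp [he])]
      obtain ⟨c, hc⟩ := he
      rw [hc, show c + c = 2 * c by ring, pow_mul, sq,
        walsh_mul ht, Nat.xor_self, walsh_zero, one_pow]
    · rw [if_pos (by simp [he])]
      obtain ⟨c, hc⟩ := Nat.not_even_iff_odd.mp he
      rw [hc, pow_succ, pow_mul, sq, walsh_mul ht, Nat.xor_self, walsh_zero, one_pow, one_mul]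
  have hcong : ∫ t in Set.Icc (0:ℝ) 1, ∏ k ∈ Finset.range N, (walsh (n k) t) ^ (e k) =
      ∫ t in Set.Icc (0:ℝ) 1, walsh (xorSum s n) t := by
    apply integral_congr_ae
    filter_upwards [goodSet_ae] with t ht
    exact key t ht
  rw [hcong]
  by_cases hall : ∀ k ∈ Finset.range N, Even (e k)
  · have : s = ∅ := by
      rw [hs, Finset.filter_eq_empty_iff]
      intro k hk
      simp [hall k hk]
    rw [if_pos hall, this, xorSum_empty]
    simp only [walsh_zero]
    rw [setIntegral_const, measureReal_def, Real.volume_Icc, smul_eq_mul]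
    norm_num
  · have : s.Nonempty := by
      push_neg at hall
      obtain ⟨k, hk, hke⟩ := hall
      exact ⟨k, by rw [hs, Finset.mem_filter]; exact ⟨hk, hke⟩⟩
    rw [if_neg hall]
    exact walsh_integral_zero (Nat.one_le_iff_ne_zero.mpr (lacunary_xorSum_ne_zero hn1 hl this))

lemma prob_Icc : IsProbabilityMeasure (volume.restrict (Set.Icc (0:ℝ) 1)) := by
  constructor
  rw [Measure.restrict_apply_univ, Real.volume_Icc]
  norm_num

lemma integrable_of_bounded {h : ℝ → ℝ} (hm : Measurable h) (C : ℝ) (hb : ∀ t, |h t| ≤ C) :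
    Integrable h (volume.restrict (Set.Icc (0:ℝ) 1)) := by
  have := prob_Icc
  apply Integrable.mono' (integrable_const C) hm.aestronglyMeasurable.restrict
  exact Eventually.of_forall fun t => by simpa using hb t

lemma walsh_pow_prod_meas (N : ℕ) (e : ℕ → ℕ) :
    Measurable (fun t => ∏ k ∈ Finset.range N, (walsh (n k) t) ^ (e k)) :=
  Finset.measurable_prod _ fun k _ => (walsh_measurable (n k)).pow_const _

lemma walsh_pow_prod_bdd (N : ℕ) (e : ℕ → ℕ) (t : ℝ) :
    |∏ k ∈ Finset.range N, (walsh (n k) t) ^ (e k)| ≤ 1 := by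
  rw [Finset.abs_prod]
  apply Finset.prod_le_one
  · intro i _; positivity
  · intro i _
    rw [abs_pow]
    exact pow_le_one₀ (abs_nonneg _) (walsh_abs_le _ _)

include hn1 hl in
lemma moment_bound (b : ℕ → ℝ) (N m : ℕ) :
    ∫ t in Set.Icc (0:ℝ) 1, (∑ k ∈ Finset.range N, b k * walsh (n k) t) ^ (2*m)
      ≤ (Nat.factorial (2*m) : ℝ) * (∑ k ∈ Finset.range N, (b k)^2) ^ m := by
  have := prob_Icc
  rcases Nat.eq_zero_or_pos m with hm | hm
  · subst hm
    simp
  have hm' : m ≠ 0 := by omega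
  have expand : ∀ t : ℝ, (∑ k ∈ Finset.range N, b k * walsh (n k) t) ^ (2*m) =
      ∑ e ∈ (Finset.range N).piAntidiag (2*m),
        ((Nat.multinomial (Finset.range N) e : ℝ) * ∏ k ∈ Finset.range N, (b k) ^ (e k)) *
          ∏ k ∈ Finset.range N, (walsh (n k) t) ^ (e k) := by
    intro t
    rw [Finset.sum_pow_eq_sum_piAntidiag]
    apply Finset.sum_congr rfl
    intro e _
    rw [mul_assoc]
    congr 1
    rw [← Finset.prod_mul_distrib]
    apply Finset.prod_congr rfl
    intro k _
    rw [mul_pow]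
  calc ∫ t in Set.Icc (0:ℝ) 1, (∑ k ∈ Finset.range N, b k * walsh (n k) t) ^ (2*m)
      = ∑ e ∈ (Finset.range N).piAntidiag (2*m),
          ((Nat.multinomial (Finset.range N) e : ℝ) * ∏ k ∈ Finset.range N, (b k) ^ (e k)) *
            ∫ t in Set.Icc (0:ℝ) 1, ∏ k ∈ Finset.range N, (walsh (n k) t) ^ (e k) := by
        rw [integral_congr_ae (Eventually.of_forall expand), integral_finset_sum]
        · exact Finset.sum_congr rfl fun e _ => integral_const_mul _ _
        · intro e _
          exact (integrable_of_bounded (walsh_pow_prod_meas N (e := e))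
            1 (walsh_pow_prod_bdd N e)).const_mul _
    _ = ∑ e ∈ ((Finset.range N).piAntidiag (2*m)).filter
          (fun e => ∀ k ∈ Finset.range N, Even (e k)),
          (Nat.multinomial (Finset.range N) e : ℝ) * ∏ k ∈ Finset.range N, (b k) ^ (e k) := by
        rw [Finset.sum_filter]
        apply Finset.sum_congr rfl
        intro e _
        rw [integral_walsh_pow_prod hn1 hl N e]
        by_cases h : ∀ k ∈ Finset.range N, Even (e k) <;> simp [h]
    _ = ∑ f ∈ (Finset.range N).piAntidiag m,
          (Nat.multinomial (Finset.range N) (2 • f) : ℝ) *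
            ∏ k ∈ Finset.range N, (b k) ^ ((2 • f) k) := by
        rw [show ((Finset.range N).piAntidiag (2*m)).filter
              (fun e => ∀ k ∈ Finset.range N, Even (e k))
            = ((Finset.range N).piAntidiag (2*m)).filter
              (fun e => ∀ k ∈ Finset.range N, 2 ∣ e k) by
          apply Finset.filter_congr
          intro e _
          simp only [even_iff_two_dvd]]
        rw [← Finset.map_nsmul_piAntidiag (Finset.range N) m (two_ne_zero), Finset.sum_map]
        simp only [Function.Embedding.coeFn_mk]
    _ ≤ ∑ f ∈ (Finset.range N).piAntidiag m,
          (Nat.factorial (2*m) : ℝ) *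
            ((Nat.multinomial (Finset.range N) f : ℝ) *
              ∏ k ∈ Finset.range N, ((b k)^2) ^ (f k)) := by
        apply Finset.sum_le_sum
        intro f hf
        obtain ⟨hsum, -⟩ := Finset.mem_piAntidiag.mp hf
        have hprod : ∏ k ∈ Finset.range N, (b k) ^ ((2 • f) k)
            = ∏ k ∈ Finset.range N, ((b k)^2) ^ (f k) := by
          apply Finset.prod_congr rfl
          intro k _
          rw [Pi.smul_apply, smul_eq_mul, pow_mul]
        rw [hprod, ← mul_assoc]
        apply mul_le_mul_of_nonneg_right _ (Finset.prod_nonneg fun k _ => by positivity)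
        have h2sum : ∑ k ∈ Finset.range N, (2 • f) k = 2 * m := by
          simp only [Pi.smul_apply, smul_eq_mul, ← Finset.mul_sum, hsum]
        have hle : Nat.multinomial (Finset.range N) (2 • f) ≤ Nat.factorial (2*m) := by
          have hspec := Nat.multinomial_spec (Finset.range N) (2 • f)
          rw [h2sum] at hspec
          calc Nat.multinomial (Finset.range N) (2 • f)
              ≤ (∏ i ∈ Finset.range N, ((2 • f) i).factorial) *
                  Nat.multinomial (Finset.range N) (2 • f) :=
                Nat.le_mul_of_pos_left _ (Finset.prod_pos fun i _ => Nat.factorial_pos _)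
            _ = Nat.factorial (2*m) := hspec
        have hpos : 1 ≤ Nat.multinomial (Finset.range N) f := Nat.multinomial_pos _ _
        calc (Nat.multinomial (Finset.range N) (2 • f) : ℝ)
            ≤ (Nat.factorial (2*m) : ℝ) := by exact_mod_cast hle
          _ ≤ (Nat.factorial (2*m) : ℝ) * (Nat.multinomial (Finset.range N) f : ℝ) := by
              nlinarith [Nat.factorial_pos (2*m), (by exact_mod_cast hpos : (1:ℝ) ≤ (Nat.multinomial (Finset.range N) f : ℝ)), (by positivity : (0:ℝ) ≤ (Nat.factorial (2*m) : ℝ))]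
    _ = (Nat.factorial (2*m) : ℝ) * (∑ k ∈ Finset.range N, (b k)^2) ^ m := by
        rw [← Finset.mul_sum, Finset.sum_pow_eq_sum_piAntidiag]

end Lacunary

noncomputable def Kp (p : ℝ) : ℝ :=
  (1 + (Nat.factorial (2 * ⌈Real.conjExponent p⌉₊) : ℝ)) ^ (1 / Real.conjExponent p)

lemma Kp_pos {p : ℝ} (hp : 1 < p) : 0 < Kp p := by
  apply Real.rpow_pos_of_pos
  positivity

lemma lpNorm_nonneg (p : ℝ) (f : ℝ → ℝ) : 0 ≤ lpNorm p f := by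
  apply Real.rpow_nonneg
  apply integral_nonneg
  intro t
  positivity

lemma engine {p : ℝ} (hp : 1 < p) {n : ℕ → ℕ}
    (hn1 : ∀ k, 1 ≤ n k) (hl : ∀ k, 2 * n k ≤ n (k + 1)) {f : ℝ → ℝ}
    (hf : MemLp f (ENNReal.ofReal p) (volume.restrict (Set.Icc (0:ℝ) 1))) (N : ℕ) :
    ∑ k ∈ Finset.range N, (∫ t in Set.Icc (0:ℝ) 1, f t * walsh (n k) t) ^ 2
      ≤ (Kp p)^2 * (lpNorm p f)^2 := by
  have hprob := prob_Icc
  set μ := volume.restrict (Set.Icc (0:ℝ) 1) with hμ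
  set P := Real.conjExponent p with hP
  have hpq : p.HolderConjugate P := Real.HolderConjugate.conjExponent hp
  have hP1 : 1 < P := hpq.symm.lt
  set m₀ := ⌈P⌉₊ with hm₀
  have hPm : P ≤ (2 * m₀ : ℕ) := by
    calc P ≤ (m₀ : ℝ) := Nat.le_ceil P
      _ ≤ ((2 * m₀ : ℕ) : ℝ) := by push_cast; linarith [Nat.cast_nonneg (α := ℝ) m₀]
  set c : ℕ → ℝ := fun k => ∫ t in Set.Icc (0:ℝ) 1, f t * walsh (n k) t with hc
  set A := ∑ k ∈ Finset.range N, (c k)^2 with hA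
  have hA0 : 0 ≤ A := Finset.sum_nonneg fun k _ => sq_nonneg _
  have hRHS0 : 0 ≤ (Kp p)^2 * (lpNorm p f)^2 := by positivity
  rcases eq_or_lt_of_le hA0 with hA0' | hApos
  · rw [← hA0']; exact hRHS0
  -- normalized coefficients
  set sA := Real.sqrt A with hsA
  have hsA0 : 0 < sA := Real.sqrt_pos.mpr hApos
  set b : ℕ → ℝ := fun k => c k / sA with hb
  have hbsum : ∑ k ∈ Finset.range N, (b k)^2 = 1 := by
    rw [hb]
    simp only [div_pow]
    rw [← Finset.sum_div, Real.sq_sqrt hA0, ← hA, div_self (ne_of_gt hApos)]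
  set g : ℝ → ℝ := fun t => ∑ k ∈ Finset.range N, b k * walsh (n k) t with hg
  have hgm : Measurable g := by
    apply Finset.measurable_sum
    intro k _
    exact (walsh_measurable (n k)).const_mul _
  set B₀ : ℝ := ∑ k ∈ Finset.range N, |b k| with hB₀
  have hgb : ∀ t, |g t| ≤ B₀ := by
    intro t
    rw [hg, hB₀]
    calc |∑ k ∈ Finset.range N, b k * walsh (n k) t|
        ≤ ∑ k ∈ Finset.range N, |b k * walsh (n k) t| := Finset.abs_sum_le_sum_abs _ _
      _ ≤ ∑ k ∈ Finset.range N, |b k| := by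
          apply Finset.sum_le_sum
          intro k _
          rw [abs_mul]
          calc |b k| * |walsh (n k) t| ≤ |b k| * 1 :=
                mul_le_mul_of_nonneg_left (walsh_abs_le _ _) (abs_nonneg _)
            _ = |b k| := mul_one _
  have hgL : MemLp g (ENNReal.ofReal P) μ :=
    MemLp.of_bound hgm.aestronglyMeasurable.restrict B₀ (Eventually.of_forall fun t => by
      simpa using hgb t)
  have hf_int : Integrable f μ := by
    apply hf.integrable
    rw [ENNReal.one_le_ofReal]
    linarith
  have h_int_fw : ∀ k : ℕ, Integrable (fun t => f t * walsh (n k) t) μ := by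
    intro k
    have := Integrable.bdd_mul (f := walsh (n k)) hf_int
      (walsh_measurable (n k)).aestronglyMeasurable.restrict
      (Eventually.of_forall fun t => by simpa using walsh_abs_le (n k) t)
    have heq : (fun t => walsh (n k) t * f t) = fun t => f t * walsh (n k) t :=
      funext fun t => mul_comm _ _
    rwa [heq] at this
  have h_int_fg : Integrable (fun t => f t * g t) μ := by
    have := Integrable.bdd_mul (f := g) hf_int hgm.aestronglyMeasurable.restrict (Eventually.of_forall fun t => by
      simpa using hgb t)
    have heq : (fun t => g t * f t) = fun t => f t * g t := funext fun t => mul_comm _ _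
    rwa [heq] at this
  -- duality: ∫ f g = √A
  have step_sum : ∫ t in Set.Icc (0:ℝ) 1, f t * g t = sA := by
    have hpt : ∀ t : ℝ, f t * g t = ∑ k ∈ Finset.range N, b k * (f t * walsh (n k) t) := by
      intro t
      rw [hg, Finset.mul_sum]
      apply Finset.sum_congr rfl
      intro k _
      ring
    rw [integral_congr_ae (Eventually.of_forall hpt), integral_finset_sum]
    · have : ∀ k ∈ Finset.range N, (∫ t in Set.Icc (0:ℝ) 1, b k * (f t * walsh (n k) t))
          = b k * c k := fun k _ => integral_const_mul _ _
      rw [Finset.sum_congr rfl this]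
      have : ∀ k ∈ Finset.range N, b k * c k = (c k)^2 / sA := by
        intro k _
        rw [hb]
        ring
      rw [Finset.sum_congr rfl this, ← Finset.sum_div, ← hA, hsA, Real.div_sqrt]
    · intro k _
      exact (h_int_fw k).const_mul _
  -- Hölder
  have step_holder : ∫ t in Set.Icc (0:ℝ) 1, f t * g t ≤
      lpNorm p f * (∫ t in Set.Icc (0:ℝ) 1, |g t| ^ P) ^ (1/P) := by
    calc ∫ t in Set.Icc (0:ℝ) 1, f t * g t
        ≤ ∫ t in Set.Icc (0:ℝ) 1, ‖f t‖ * ‖g t‖ := by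
          apply integral_mono h_int_fg (h_int_fg.abs.congr ?_) ?_
          · apply Eventually.of_forall
            intro t
            simp [Real.norm_eq_abs, abs_mul]
          · intro t
            calc f t * g t ≤ |f t * g t| := le_abs_self _
              _ = ‖f t‖ * ‖g t‖ := by rw [abs_mul]; rfl
      _ ≤ (∫ t in Set.Icc (0:ℝ) 1, ‖f t‖ ^ p) ^ (1/p) *
            (∫ t in Set.Icc (0:ℝ) 1, ‖g t‖ ^ P) ^ (1/P) :=
          MeasureTheory.integral_mul_norm_le_Lp_mul_Lq hpq hf hgL
      _ = lpNorm p f * (∫ t in Set.Icc (0:ℝ) 1, |g t| ^ P) ^ (1/P) := by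
          rw [_root_.lpNorm]
          simp [Real.norm_eq_abs]
  -- moment bound on ∫ |g|^P
  have step_norm : ∫ t in Set.Icc (0:ℝ) 1, |g t| ^ P ≤ 1 + (Nat.factorial (2*m₀) : ℝ) := by
    have hpt : ∀ t : ℝ, |g t| ^ P ≤ 1 + (g t) ^ (2*m₀) := by
      intro t
      have heven : Even (2*m₀) := even_two_mul m₀
      rcases le_or_gt (|g t|) 1 with h | h
      · have h1 : |g t| ^ P ≤ 1 := Real.rpow_le_one (abs_nonneg _) h (by linarith)
        have h2 : (0:ℝ) ≤ (g t) ^ (2*m₀) := heven.pow_nonneg _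
        linarith
      · calc |g t| ^ P ≤ |g t| ^ ((2*m₀ : ℕ) : ℝ) :=
              Real.rpow_le_rpow_of_exponent_le h.le hPm
          _ = |g t| ^ (2*m₀ : ℕ) := Real.rpow_natCast _ _
          _ = (g t) ^ (2*m₀) := heven.pow_abs _
          _ ≤ 1 + (g t) ^ (2*m₀) := by linarith
    have hgpow_int : Integrable (fun t => (g t) ^ (2*m₀)) μ := by
      apply integrable_of_bounded (hgm.pow_const _) (B₀ ^ (2*m₀))
      intro t
      rw [abs_pow]
      apply pow_le_pow_left₀ (abs_nonneg _) (hgb t)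
    calc ∫ t in Set.Icc (0:ℝ) 1, |g t| ^ P
        ≤ ∫ t in Set.Icc (0:ℝ) 1, (1 + (g t) ^ (2*m₀)) := by
          apply integral_mono_of_nonneg
            (Eventually.of_forall fun t => Real.rpow_nonneg (abs_nonneg _) _)
            ((integrable_const 1).add hgpow_int)
            (Eventually.of_forall hpt)
      _ = 1 + ∫ t in Set.Icc (0:ℝ) 1, (g t) ^ (2*m₀) := by
          rw [integral_add (integrable_const 1) hgpow_int]
          simp [hμ]
      _ ≤ 1 + (Nat.factorial (2*m₀) : ℝ) * (∑ k ∈ Finset.range N, (b k)^2) ^ m₀ := by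
          have := moment_bound hn1 hl b N m₀
          linarith
      _ = 1 + (Nat.factorial (2*m₀) : ℝ) := by rw [hbsum, one_pow, mul_one]
  -- combine
  have hKP : (∫ t in Set.Icc (0:ℝ) 1, |g t| ^ P) ^ (1/P) ≤ Kp p := by
    rw [Kp, ← hP, ← hm₀]
    apply Real.rpow_le_rpow (integral_nonneg fun t => Real.rpow_nonneg (abs_nonneg _) _)
      step_norm (by positivity)
  have final : sA ≤ lpNorm p f * Kp p := by
    calc sA = ∫ t in Set.Icc (0:ℝ) 1, f t * g t := step_sum.symm
      _ ≤ lpNorm p f * (∫ t in Set.Icc (0:ℝ) 1, |g t| ^ P) ^ (1/P) := step_holder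
      _ ≤ lpNorm p f * Kp p := mul_le_mul_of_nonneg_left hKP (lpNorm_nonneg p f)
  have : A = sA ^ 2 := (Real.sq_sqrt hA0).symm
  rw [this]
  calc sA ^ 2 ≤ (lpNorm p f * Kp p) ^ 2 := by
        apply pow_le_pow_left₀ hsA0.le final
    _ = (Kp p)^2 * (lpNorm p f)^2 := by ring

end AuxWalsh

/-- **Square-sum bound for lacunary Walsh coefficients of `L^p` functions**,
`1 < p < ∞`. -/
theorem walsh_coefficient_bound (p q : ℝ) (hp : 1 < p) (hq : 1 < q) :
    ∃ C : ℝ, 0 < C ∧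
      ∀ n : ℕ → ℕ, WalshLacunary q n →
        ∀ f : ℝ → ℝ,
          MemLp f (ENNReal.ofReal p) (volume.restrict (Set.Icc (0:ℝ) 1)) →
          Summable (fun k => (∫ t in Set.Icc (0:ℝ) 1, f t * walsh (n k) t) ^ 2) ∧
          Real.sqrt (∑' k, (∫ t in Set.Icc (0:ℝ) 1, f t * walsh (n k) t) ^ 2) ≤
            C * lpNorm p f := by
  obtain ⟨d, hd⟩ : ∃ d : ℕ, 2 < q ^ d := pow_unbounded_of_one_lt 2 hq
  have hd0 : 0 < d := by
    by_contra h
    push_neg at h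
    interval_cases d
    norm_num at hd
  have hdR : (0:ℝ) < d := by exact_mod_cast hd0
  refine ⟨Real.sqrt d * Kp p, mul_pos (Real.sqrt_pos.mpr hdR) (Kp_pos hp), ?_⟩
  intro n hn f hf
  obtain ⟨hn1, hql⟩ := hn
  set c : ℕ → ℝ := fun k => ∫ t in Set.Icc (0:ℝ) 1, f t * walsh (n k) t with hc
  -- iterated lacunarity
  have chain : ∀ k e : ℕ, q ^ e * (n k : ℝ) ≤ (n (k + e) : ℝ) := by
    intro k e
    induction e with
    | zero => simp
    | succ e ih =>
        have h1 : q ^ (e+1) * (n k : ℝ) = q * (q ^ e * n k) := by ring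
        have h2 : q * (q ^ e * (n k:ℝ)) ≤ q * n (k + e) :=
          mul_le_mul_of_nonneg_left ih (by linarith)
        calc q ^ (e+1) * (n k : ℝ) = q * (q ^ e * n k) := h1
          _ ≤ q * n (k + e) := h2
          _ ≤ n (k + e + 1) := hql (k + e)
  -- each residue-class subsequence is 2-lacunary
  have hsub : ∀ r : ℕ, ∀ j : ℕ, 2 * n (d * j + r) ≤ n (d * (j+1) + r) := by
    intro r j
    have h1 : (2:ℝ) * n (d * j + r) ≤ q ^ d * n (d * j + r) := by
      apply mul_le_mul_of_nonneg_right hd.le (by positivity)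
    have h2 := chain (d * j + r) d
    have h3 : d * j + r + d = d * (j + 1) + r := by ring
    rw [h3] at h2
    have : (2:ℝ) * n (d * j + r) ≤ (n (d * (j+1) + r) : ℝ) := le_trans h1 h2
    exact_mod_cast this
  set D := (Kp p)^2 * (lpNorm p f)^2 with hD
  have hDr : ∀ r : ℕ, ∀ N : ℕ, ∑ j ∈ Finset.range N, (c (d * j + r))^2 ≤ D := by
    intro r N
    exact engine hp (fun j => hn1 _) (fun j => hsub r j) hf N
  have hpartial : ∀ N : ℕ, ∑ k ∈ Finset.range N, (c k)^2 ≤ d * D := by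
    intro N
    have hinj : ∀ x ∈ Finset.range N, ∀ y ∈ Finset.range N,
        (fun k => ((k % d, k / d) : ℕ × ℕ)) x = (fun k => ((k % d, k / d) : ℕ × ℕ)) y → x = y := by
      intro x _ y _ h
      simp only [Prod.mk.injEq] at h
      rw [← Nat.div_add_mod x d, ← Nat.div_add_mod y d, h.1, h.2]
    have himg : ∑ k ∈ Finset.range N, (c k)^2 =
        ∑ pr ∈ (Finset.range N).image (fun k => ((k % d, k / d) : ℕ × ℕ)),
          (c (d * pr.2 + pr.1))^2 := by
      rw [Finset.sum_image hinj]
      apply Finset.sum_congr rfl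
      intro k _
      have hk : d * (k / d) + k % d = k := Nat.div_add_mod k d
      simp [hk]
    rw [himg]
    calc ∑ pr ∈ (Finset.range N).image (fun k => ((k % d, k / d) : ℕ × ℕ)),
          (c (d * pr.2 + pr.1))^2
        ≤ ∑ pr ∈ Finset.range d ×ˢ Finset.range N, (c (d * pr.2 + pr.1))^2 := by
          apply Finset.sum_le_sum_of_subset_of_nonneg
          · intro pr hpr
            obtain ⟨k, hk, hpr'⟩ := Finset.mem_image.mp hpr
            rw [Finset.mem_range] at hk
            rw [← hpr', Finset.mem_product, Finset.mem_range, Finset.mem_range]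
            constructor
            · exact Nat.mod_lt k hd0
            · exact lt_of_le_of_lt (Nat.div_le_self k d) hk
          · intro pr _ _
            positivity
      _ = ∑ r ∈ Finset.range d, ∑ j ∈ Finset.range N, (c (d * j + r))^2 := by
          rw [Finset.sum_product]
      _ ≤ ∑ r ∈ Finset.range d, D := Finset.sum_le_sum fun r _ => hDr r N
      _ = d * D := by rw [Finset.sum_const, Finset.card_range, nsmul_eq_mul]
  have hsumm : Summable (fun k => (c k)^2) :=
    summable_of_sum_range_le (fun k => sq_nonneg _) hpartial
  refine ⟨hsumm, ?_⟩
  have htsum : ∑' k, (c k)^2 ≤ d * D :=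
    Real.tsum_le_of_sum_range_le (fun k => sq_nonneg _) hpartial
  calc Real.sqrt (∑' k, (c k)^2) ≤ Real.sqrt (d * D) := Real.sqrt_le_sqrt htsum
    _ = Real.sqrt d * Kp p * lpNorm p f := by
        rw [hD, show (d:ℝ) * ((Kp p)^2 * (lpNorm p f)^2)
            = (Real.sqrt d * Kp p * lpNorm p f)^2 by
          rw [mul_pow, mul_pow, Real.sq_sqrt hdR.le]; ring]
        have h0 : 0 ≤ Real.sqrt d * Kp p * lpNorm p f := by
          have := Kp_pos hp
          have := lpNorm_nonneg p f
          positivity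
        exact Real.sqrt_sq h0
end

section
/- (The normalized distribution map of a set of positive measure is measure preserving) Let E ⊂ [0,1] be a measurable set with m(E) > 0 and define ρ_E : E → [0,1] by ρ_E(x) := m(E ∩ [0,x])/m(E). Then there exist sets A_1 ⊂ E and A_2 ⊂ [0,1] of Lebesgue measure zero such that ρ_E : E ∖ A_1 → [0,1] ∖ A_2 is bijective, and the pushforward under ρ_E of the normalized measure m_E(A) := m(E ∩ A)/m(E) on E equals Lebesgue measure on [0,1]. -/
open MeasureTheory Real Set Filter

/-- The normalized distribution map `ρ_E(x) = m(E ∩ [0,x]) / m(E)` of a set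
`E ⊆ [0,1]` of positive measure. -/
noncomputable def rhoMap (E : Set ℝ) (x : ℝ) : ℝ :=
  (volume (E ∩ Set.Icc 0 x)).toReal / (volume E).toReal

/-- **The normalized distribution map of a set of positive measure is measure
preserving**: `ρ_E` is a bijection from `E` onto `[0,1]` up to null sets, and
the pushforward under `ρ_E` of the normalized measure `m_E(A) = m(E ∩ A)/m(E)`
equals Lebesgue measure on `[0,1]`. -/
theorem rhoMap_measurePreserving (E : Set ℝ) (hE : E ⊆ Set.Icc 0 1)
    (hEm : MeasurableSet E) (hE0 : 0 < volume E) :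
    (∃ A₁ A₂ : Set ℝ, A₁ ⊆ E ∧ A₂ ⊆ Set.Icc 0 1 ∧
      volume A₁ = 0 ∧ volume A₂ = 0 ∧
      Set.BijOn (rhoMap E) (E \ A₁) (Set.Icc 0 1 \ A₂)) ∧
    Measure.map (rhoMap E) ((volume E)⁻¹ • volume.restrict E) =
      volume.restrict (Set.Icc (0:ℝ) 1) := by
  have hfin : volume E ≠ ⊤ :=
    ((measure_mono hE).trans_lt (by simp [Real.volume_Icc] : volume (Icc (0:ℝ) 1) < ⊤)).ne
  have hEt : 0 < (volume E).toReal := ENNReal.toReal_pos hE0.ne' hfin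
  have hfinx : ∀ x : ℝ, volume (E ∩ Icc 0 x) ≠ ⊤ :=
    fun x => ne_top_of_le_ne_top hfin (measure_mono inter_subset_left)
  have hFmono : ∀ ⦃x y : ℝ⦄, x ≤ y → volume (E ∩ Icc 0 x) ≤ volume (E ∩ Icc 0 y) :=
    fun x y h => measure_mono (inter_subset_inter_right _ (Icc_subset_Icc_right h))
  have hmono : Monotone (rhoMap E) := fun x y h =>
    div_le_div_of_nonneg_right (ENNReal.toReal_mono (hfinx y) (hFmono h)) hEt.le
  have h01 : ∀ x, rhoMap E x ∈ Icc (0:ℝ) 1 := fun x =>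
    ⟨div_nonneg ENNReal.toReal_nonneg ENNReal.toReal_nonneg, by
      rw [rhoMap, div_le_one hEt]
      exact ENNReal.toReal_mono hfin (measure_mono inter_subset_left)⟩
  have hsplit : ∀ ⦃x y : ℝ⦄, x ≤ y →
      volume (E ∩ Icc 0 y) = volume (E ∩ Icc 0 x) + volume (E ∩ Ioc x y) := by
    intro x y hxy
    rw [← measure_union ?_ (hEm.inter measurableSet_Ioc)]
    · congr 1
      ext t
      constructor
      · rintro ⟨ht, h0, hty⟩
        rcases le_or_gt t x with h | h
        · exact Or.inl ⟨ht, h0, h⟩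
        · exact Or.inr ⟨ht, h, hty⟩
      · rintro (⟨ht, h0, htx⟩ | ⟨ht, hxt, hty⟩)
        · exact ⟨ht, h0, htx.trans hxy⟩
        · exact ⟨ht, (hE ht).1, hty⟩
    · exact Set.disjoint_left.2 fun t ⟨_, _, h1⟩ ⟨_, h2, _⟩ => absurd h1 (not_le.2 h2)
  -- Lipschitz / continuity
  have hd : ∀ x y : ℝ, x ≤ y →
      dist ((volume (E ∩ Icc 0 x)).toReal) ((volume (E ∩ Icc 0 y)).toReal) ≤ dist x y := by
    intro x y h
    have h2 : (volume (E ∩ Icc 0 y)).toReal - (volume (E ∩ Icc 0 x)).toReal ≤ y - x := by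
      have h3 : (volume (E ∩ Icc 0 y)).toReal
          = (volume (E ∩ Icc 0 x)).toReal + (volume (E ∩ Ioc x y)).toReal := by
        rw [hsplit h, ENNReal.toReal_add (hfinx x) (ne_top_of_le_ne_top hfin
          (measure_mono inter_subset_left))]
      have h4 : (volume (E ∩ Ioc x y)).toReal ≤ y - x := by
        have := ENNReal.toReal_mono (by simp [Real.volume_Ioc] : volume (Ioc x y) ≠ ⊤)
          (measure_mono (inter_subset_right : E ∩ Ioc x y ⊆ Ioc x y))
        rwa [Real.volume_Ioc, ENNReal.toReal_ofReal (by linarith)] at this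
      linarith
    rw [Real.dist_eq, Real.dist_eq, abs_sub_comm, abs_of_nonneg
      (sub_nonneg.2 (ENNReal.toReal_mono (hfinx y) (hFmono h))), abs_sub_comm,
      abs_of_nonneg (sub_nonneg.2 h)]
    exact h2
  have hcont : Continuous (rhoMap E) := by
    have hlip : LipschitzWith 1 (fun x : ℝ => (volume (E ∩ Icc 0 x)).toReal) := by
      refine LipschitzWith.of_dist_le_mul fun x y => ?_
      rcases le_total x y with h | h
      · simpa using hd x y h
      · rw [dist_comm, dist_comm x y]; simpa using hd y x h
    exact hlip.continuous.div_const _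
  have hρ0 : rhoMap E 0 = 0 := by
    have h0 : volume (E ∩ Icc (0:ℝ) 0) = 0 :=
      le_antisymm ((measure_mono inter_subset_right).trans (by simp)) (zero_le)
    simp only [rhoMap, h0, ENNReal.toReal_zero, zero_div]
  have hρ1 : rhoMap E 1 = 1 := by
    rw [rhoMap, Set.inter_eq_left.2 hE, div_self hEt.ne']
  have hsurj : ∀ c ∈ Icc (0:ℝ) 1, ∃ x ∈ Icc (0:ℝ) 1, rhoMap E x = c := by
    intro c hc
    have h := intermediate_value_Icc (by norm_num : (0:ℝ) ≤ 1) hcont.continuousOn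
    rw [hρ0, hρ1] at h
    obtain ⟨x, hx, hxc⟩ := h hc
    exact ⟨x, hx, hxc⟩
  have hρmeas : Measurable (rhoMap E) := hcont.measurable
  have hdist : ∀ c ∈ Icc (0:ℝ) 1,
      volume (E ∩ rhoMap E ⁻¹' Iic c) = ENNReal.ofReal c * volume E := by
    intro c hc
    set S := rhoMap E ⁻¹' {c} ∩ Icc 0 1 with hS
    have hSne : S.Nonempty := by
      obtain ⟨x, hx, hxc⟩ := hsurj c hc; exact ⟨x, hxc, hx⟩
    have hSbdd : BddAbove S := bddAbove_Icc.mono inter_subset_right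
    have hScl : IsClosed S := (isClosed_singleton.preimage hcont).inter isClosed_Icc
    have hmem : sSup S ∈ S := hScl.csSup_mem hSne hSbdd
    set z := sSup S with hz
    have hzc : rhoMap E z = c := hmem.1
    have heq : E ∩ rhoMap E ⁻¹' Iic c = E ∩ Icc 0 z := by
      ext t
      constructor
      · rintro ⟨ht, htc⟩
        refine ⟨ht, (hE ht).1, ?_⟩
        by_contra hcon
        push_neg at hcon
        have h1 : c ≤ rhoMap E t := hzc ▸ hmono hcon.le
        have h2 : rhoMap E t = c := le_antisymm htc h1
        exact absurd (le_csSup hSbdd ⟨h2, hE ht⟩) (not_le.2 hcon)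
      · rintro ⟨ht, _, htz⟩
        exact ⟨ht, le_of_le_of_eq (hmono htz) hzc⟩
    rw [heq]
    have h3 : (volume (E ∩ Icc 0 z)).toReal = c * (volume E).toReal :=
      (div_eq_iff hEt.ne').1 hzc
    calc volume (E ∩ Icc 0 z)
        = ENNReal.ofReal ((volume (E ∩ Icc 0 z)).toReal) :=
          (ENNReal.ofReal_toReal (hfinx z)).symm
      _ = ENNReal.ofReal (c * (volume E).toReal) := by rw [h3]
      _ = ENNReal.ofReal c * ENNReal.ofReal ((volume E).toReal) := ENNReal.ofReal_mul hc.1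
      _ = ENNReal.ofReal c * volume E := by rw [ENNReal.ofReal_toReal hfin]
  have hmap : Measure.map (rhoMap E) ((volume E)⁻¹ • volume.restrict E)
      = volume.restrict (Icc (0:ℝ) 1) := by
    have hfin1 : IsFiniteMeasure ((volume E)⁻¹ • volume.restrict E) := by
      constructor
      rw [Measure.smul_apply, Measure.restrict_apply MeasurableSet.univ, univ_inter,
        smul_eq_mul, ENNReal.inv_mul_cancel hE0.ne' hfin]
      exact ENNReal.one_lt_top
    haveI := hfin1
    refine Measure.ext_of_Iic _ _ fun a => ?_
    rw [Measure.map_apply hρmeas measurableSet_Iic, Measure.smul_apply,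
      Measure.restrict_apply (hρmeas measurableSet_Iic), smul_eq_mul,
      Measure.restrict_apply measurableSet_Iic]
    rcases lt_or_ge a 0 with ha | ha
    · have h1 : rhoMap E ⁻¹' Iic a ∩ E = ∅ :=
        eq_empty_of_forall_notMem fun t ⟨h1, _⟩ =>
          absurd ((h01 t).1.trans h1) (not_le.2 ha)
      have h2 : Iic a ∩ Icc (0:ℝ) 1 = ∅ :=
        eq_empty_of_forall_notMem fun t ⟨h1, h2, _⟩ => absurd (h2.trans h1) (not_le.2 ha)
      rw [h1, h2]
      simp
    rcases le_or_gt a 1 with ha1 | ha1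
    · have h1 := hdist a ⟨ha, ha1⟩
      rw [inter_comm] at h1
      have h2 : Iic a ∩ Icc (0:ℝ) 1 = Icc 0 a := by
        ext t
        constructor
        · rintro ⟨ht1, ht2, _⟩; exact ⟨ht2, ht1⟩
        · rintro ⟨ht1, ht2⟩; exact ⟨ht2, ht1, ht2.trans ha1⟩
      rw [h1, h2, Real.volume_Icc, sub_zero, mul_comm (ENNReal.ofReal a), ← mul_assoc,
        ENNReal.inv_mul_cancel hE0.ne' hfin, one_mul]
    · have h1 : rhoMap E ⁻¹' Iic a ∩ E = E :=
        inter_eq_right.2 fun t _ => (h01 t).2.trans ha1.le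
      have h2 : Iic a ∩ Icc (0:ℝ) 1 = Icc 0 1 :=
        inter_eq_right.2 fun t ht => ht.2.trans ha1.le
      rw [h1, h2, ENNReal.inv_mul_cancel hE0.ne' hfin, Real.volume_Icc]
      norm_num
  -- countable set of "flat" values
  set D := {c : ℝ | ∃ x y : ℝ, x < y ∧ rhoMap E x = c ∧ rhoMap E y = c} with hDdef
  have hD : D.Countable := by
    have hsub : D ⊆ rhoMap E '' (Set.range ((↑) : ℚ → ℝ)) := by
      rintro c ⟨x, y, hxy, hx, hy⟩
      obtain ⟨q, hq1, hq2⟩ := exists_rat_btwn hxy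
      exact ⟨(q : ℝ), ⟨q, rfl⟩, le_antisymm (hy ▸ hmono hq2.le) (hx ▸ hmono hq1.le)⟩
    exact ((Set.countable_range _).image _).mono hsub
  have hDm : MeasurableSet D := hD.measurableSet
  have hnull : volume (rhoMap E ⁻¹' D ∩ E) = 0 := by
    have h1 : Measure.map (rhoMap E) ((volume E)⁻¹ • volume.restrict E) D
        = volume.restrict (Icc (0:ℝ) 1) D := by rw [hmap]
    rw [Measure.map_apply hρmeas hDm, Measure.smul_apply,
      Measure.restrict_apply (hρmeas hDm), smul_eq_mul,
      Measure.restrict_apply hDm] at h1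
    have h2 : volume (D ∩ Icc (0:ℝ) 1) = 0 :=
      measure_mono_null inter_subset_left (hD.measure_zero _)
    rw [h2] at h1
    exact (mul_eq_zero.1 h1).resolve_left (by simp [ENNReal.inv_eq_zero, hfin])
  set S := E \ rhoMap E ⁻¹' D with hSdef
  have hSm : MeasurableSet S := hEm.diff (hρmeas hDm)
  have hSfin : volume S ≠ ⊤ := ne_top_of_le_ne_top hfin (measure_mono diff_subset)
  have hcomp : ∀ n : ℕ, ∃ K, K ⊆ S ∧ IsCompact K ∧
      volume (S \ K) < ((n : ENNReal) + 1)⁻¹ := by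
    intro n
    exact hSm.exists_isCompact_diff_lt hSfin (by simp)
  choose K hK1 hK2 hK3 using hcomp
  set Kt := ⋃ n, K n with hKt
  have hKtS : Kt ⊆ S := iUnion_subset hK1
  have hKtE : Kt ⊆ E := hKtS.trans diff_subset
  have hKnull : volume (S \ Kt) = 0 := by
    by_contra hcon
    obtain ⟨n, hn⟩ := ENNReal.exists_inv_nat_lt hcon
    have h1 : volume (S \ Kt) ≤ ((n : ENNReal) + 1)⁻¹ :=
      ((measure_mono (diff_subset_diff_right (subset_iUnion K n))).trans (hK3 n).le)
    have h2 : ((n : ENNReal) + 1)⁻¹ ≤ ((n : ENNReal))⁻¹ :=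
      ENNReal.inv_le_inv.2 (le_add_of_nonneg_right (zero_le))
    exact absurd ((h1.trans h2).trans_lt hn).false id
  have hImM : MeasurableSet (rhoMap E '' Kt) := by
    rw [image_iUnion]
    exact MeasurableSet.iUnion fun n => ((hK2 n).image hcont).isClosed.measurableSet
  have hImIcc : rhoMap E '' Kt ⊆ Icc (0:ℝ) 1 := image_subset_iff.2 fun x _ => h01 x
  have hA1null : volume (E \ Kt) = 0 := by
    refine measure_mono_null (fun t ht => ?_) (measure_union_null
      (show volume (rhoMap E ⁻¹' D ∩ E) = 0 from hnull) hKnull)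
    rcases Classical.em (t ∈ S) with h | h
    · exact Or.inr ⟨h, ht.2⟩
    · exact Or.inl ⟨by_contra fun hc => h ⟨ht.1, hc⟩, ht.1⟩
  have hA2m : MeasurableSet (Icc (0:ℝ) 1 \ rhoMap E '' Kt) := measurableSet_Icc.diff hImM
  have hA2null : volume (Icc (0:ℝ) 1 \ rhoMap E '' Kt) = 0 := by
    have h1 : volume.restrict (Icc (0:ℝ) 1) (Icc (0:ℝ) 1 \ rhoMap E '' Kt)
        = volume (Icc (0:ℝ) 1 \ rhoMap E '' Kt) := by
      rw [Measure.restrict_apply hA2m, inter_eq_left.2 diff_subset]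
    rw [← h1, ← hmap, Measure.map_apply hρmeas hA2m, Measure.smul_apply,
      Measure.restrict_apply (hρmeas hA2m), smul_eq_mul]
    have h2 : rhoMap E ⁻¹' (Icc (0:ℝ) 1 \ rhoMap E '' Kt) ∩ E ⊆ E \ Kt := by
      rintro t ⟨⟨_, ht2⟩, htE⟩
      exact ⟨htE, fun hc => ht2 ⟨t, hc, rfl⟩⟩
    rw [measure_mono_null h2 hA1null, mul_zero]
  have hinj : Set.InjOn (rhoMap E) Kt := by
    intro x hx y hy hxy
    by_contra hne
    rcases lt_or_gt_of_ne hne with h | h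
    · exact (hKtS hx).2 ⟨x, y, h, rfl, hxy.symm⟩
    · exact (hKtS hy).2 ⟨y, x, h, rfl, hxy⟩
  refine ⟨⟨E \ Kt, Icc 0 1 \ rhoMap E '' Kt, diff_subset, diff_subset, hA1null, hA2null, ?_⟩, hmap⟩
  have he1 : E \ (E \ Kt) = Kt := diff_diff_cancel_left hKtE
  have he2 : Icc (0:ℝ) 1 \ (Icc (0:ℝ) 1 \ rhoMap E '' Kt) = rhoMap E '' Kt :=
    diff_diff_cancel_left hImIcc
  rw [he1, he2]
  exact hinj.bijOn_image
end
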